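/- arXiv:2011.04552 — 9 statements merged into one kernel-verified Lean document; each statement's English description precedes it below -/
import Mathlib

section
/- Let x̄ ∈ X be a local minimum of problem (P) with radius r (so f(x̄) + (β/2)‖x̄‖² < f(y) + (β/2)‖y‖² for every y ∈ X ∩ closedBall(x̄, r) with y ≠ x̄), and let r_max satisfy 0 < r_max ≤ r. Then: (i) there exists μ_max > 0 such that for every μ ∈ (0, μ_max] the exterior-point minimization function f + ι̂_μ attains its minimum over closedBall(x̄, r_max), and every minimizer of f + ι̂_μ over closedBall(x̄, r_max) lies in the open ball B(x̄, r_max) (hence is a local minimizer of f + ι̂_μ); and (ii) whenever μ_k > 0 with μ_k → 0 and, for each k, x_k minimizes f + ι̂_{μ_k} over closedBall(x̄, r_max), one has x_k → x̄ and (f + ι̂_{μ_k})(x_k) → f(x̄) + (β/2)‖x̄‖². -/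
open Filter Metric Topology


/-- Attainment of local minima of the exterior-point minimization
function `f + ι̂_μ` near a local minimum `xbar` of problem (P), and convergence of
the penalized minimizers to `xbar` as `μ → 0`. -/
theorem nexos_attainment_of_local_min
    {E : Type*} [NormedAddCommGroup E] [InnerProductSpace ℝ E] [FiniteDimensional ℝ E]
    (X : Set E) (hXne : X.Nonempty) (hXcl : IsClosed X)
    (f : E → ℝ) (hconv : ConvexOn ℝ Set.univ f)
    (β : ℝ) (hβ : 0 < β)
    (xbar : E) (hxbarX : xbar ∈ X)
    -- `X` is prox-regular at `xbar`
    (hproxreg : ∃ δ > 0, ∀ y : E, ‖y - xbar‖ < δ →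
      ∃! p, p ∈ X ∧ ‖y - p‖ = Metric.infDist y X)
    -- `xbar` is a local minimum of (P) with radius `r`
    (r : ℝ) (hr : 0 < r)
    (hlocmin : ∀ y ∈ X ∩ Metric.closedBall xbar r, y ≠ xbar →
      f xbar + β / 2 * ‖xbar‖ ^ 2 < f y + β / 2 * ‖y‖ ^ 2)
    (rmax : ℝ) (hrmax : 0 < rmax) (hrmaxr : rmax ≤ r) :
    -- (i)
    (∃ μmax > (0 : ℝ), ∀ μ : ℝ, 0 < μ → μ ≤ μmax →
      (∃ z ∈ Metric.closedBall xbar rmax,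
        IsMinOn (fun y => f y + (Metric.infDist y X) ^ 2 / (2 * μ) + β / 2 * ‖y‖ ^ 2)
          (Metric.closedBall xbar rmax) z) ∧
      (∀ z ∈ Metric.closedBall xbar rmax,
        IsMinOn (fun y => f y + (Metric.infDist y X) ^ 2 / (2 * μ) + β / 2 * ‖y‖ ^ 2)
          (Metric.closedBall xbar rmax) z → z ∈ Metric.ball xbar rmax)) ∧
    -- (ii)
    (∀ (μ : ℕ → ℝ) (x : ℕ → E),
      (∀ k, 0 < μ k) →
      Filter.Tendsto μ Filter.atTop (nhds 0) →
      (∀ k, x k ∈ Metric.closedBall xbar rmax) →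
      (∀ k, IsMinOn (fun y => f y + (Metric.infDist y X) ^ 2 / (2 * μ k) + β / 2 * ‖y‖ ^ 2)
        (Metric.closedBall xbar rmax) (x k)) →
      Filter.Tendsto x Filter.atTop (nhds xbar) ∧
      Filter.Tendsto
        (fun k => f (x k) + (Metric.infDist (x k) X) ^ 2 / (2 * μ k) + β / 2 * ‖x k‖ ^ 2)
        Filter.atTop (nhds (f xbar + β / 2 * ‖xbar‖ ^ 2))) := by
  classical
  set K := Metric.closedBall xbar rmax with hK_def
  set g : E → ℝ := fun y => f y + β / 2 * ‖y‖ ^ 2 with hg_def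
  have hgval : ∀ y, g y = f y + β / 2 * ‖y‖ ^ 2 := fun _ => rfl
  have hfc : Continuous f := by
    have := hconv.continuousOn isOpen_univ
    rw [← continuousOn_univ]; exact this
  have hdc : Continuous (fun y : E => Metric.infDist y X) :=
    continuous_infDist_pt X
  have hgc : Continuous g := hfc.add (continuous_const.mul (continuous_norm.pow 2))
  have hFc : ∀ μ : ℝ, Continuous
      (fun y => f y + (Metric.infDist y X) ^ 2 / (2 * μ) + β / 2 * ‖y‖ ^ 2) := by
    intro μ
    exact (hfc.add ((hdc.pow 2).div_const _)).add
      (continuous_const.mul (continuous_norm.pow 2))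
  have hKcpt : IsCompact K := isCompact_closedBall xbar rmax
  have hKcl : IsClosed K := Metric.isClosed_closedBall
  have hxbarK : xbar ∈ K := Metric.mem_closedBall_self hrmax.le
  have hKne : K.Nonempty := ⟨xbar, hxbarK⟩
  have hdxbar : Metric.infDist xbar X = 0 := Metric.infDist_zero_of_mem hxbarX
  -- minimum of g on K
  obtain ⟨w, hwK, hw⟩ := hKcpt.exists_isMinOn hKne hgc.continuousOn
  have hwle : ∀ y ∈ K, g w ≤ g y := fun y hy => hw hy
  -- existence of minimizers for each μ > 0
  have hex : ∀ μ : ℝ, ∃ z ∈ K, IsMinOn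
      (fun y => f y + (Metric.infDist y X) ^ 2 / (2 * μ) + β / 2 * ‖y‖ ^ 2) K z := by
    intro μ
    exact hKcpt.exists_isMinOn hKne (hFc μ).continuousOn
  -- key lemma: limits of bounded-penalty sequences equal xbar
  have key : ∀ (μ : ℕ → ℝ) (z : ℕ → E) (z' : E),
      (∀ k, 0 < μ k) → Tendsto μ atTop (nhds 0) →
      (∀ k, z k ∈ K) →
      (∀ k, f (z k) + (Metric.infDist (z k) X) ^ 2 / (2 * μ k) + β / 2 * ‖z k‖ ^ 2 ≤ g xbar) →
      Tendsto z atTop (nhds z') → z' = xbar := by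
    intro μ z z' hμpos hμ0 hzK hle hz
    have hdnn : ∀ k, (0:ℝ) ≤ (Metric.infDist (z k) X) ^ 2 / (2 * μ k) := fun k =>
      div_nonneg (sq_nonneg _) (by have := hμpos k; linarith)
    have hgle : ∀ k, g (z k) ≤ g xbar := by
      intro k
      have h1 := hle k
      have h2 := hdnn k
      simp only [hgval] at h1 ⊢
      linarith
    have hdb : ∀ k, (Metric.infDist (z k) X) ^ 2 ≤ 2 * μ k * (g xbar - g w) := by
      intro k
      have h1 := hle k
      have h2 := hwle (z k) (hzK k)
      have h3 : (Metric.infDist (z k) X) ^ 2 / (2 * μ k) ≤ g xbar - g w := by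
        simp only [hgval] at h1 h2 ⊢; linarith
      have hμk : (0:ℝ) < 2 * μ k := by have := hμpos k; linarith
      calc (Metric.infDist (z k) X) ^ 2 = (Metric.infDist (z k) X) ^ 2 / (2 * μ k) * (2 * μ k) := by
            field_simp [(hμpos k).ne']
        _ ≤ (g xbar - g w) * (2 * μ k) := by
            apply mul_le_mul_of_nonneg_right h3 hμk.le
        _ = 2 * μ k * (g xbar - g w) := by ring
    have hbnd0 : Tendsto (fun k => 2 * μ k * (g xbar - g w)) atTop (nhds 0) := by
      have := (hμ0.const_mul 2).mul_const (g xbar - g w)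
      simpa using this
    have hdsq0 : Tendsto (fun k => (Metric.infDist (z k) X) ^ 2) atTop (nhds 0) :=
      squeeze_zero (fun k => sq_nonneg _) hdb hbnd0
    have hdsq' : Tendsto (fun k => (Metric.infDist (z k) X) ^ 2) atTop
        (nhds ((Metric.infDist z' X) ^ 2)) :=
      ((hdc.pow 2).tendsto z').comp hz
    have hdz'0 : Metric.infDist z' X = 0 := by
      have := tendsto_nhds_unique hdsq' hdsq0
      exact pow_eq_zero_iff (n := 2) (by norm_num) |>.mp this
    have hz'X : z' ∈ X := (hXcl.mem_iff_infDist_zero hXne).2 hdz'0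
    have hz'K : z' ∈ K := hKcl.mem_of_tendsto hz (Filter.Eventually.of_forall hzK)
    have hgz' : g z' ≤ g xbar :=
      le_of_tendsto ((hgc.tendsto z').comp hz) (Filter.Eventually.of_forall hgle)
    by_contra hne
    have hz'r : z' ∈ Metric.closedBall xbar r :=
      Metric.closedBall_subset_closedBall hrmaxr hz'K
    have := hlocmin z' ⟨hz'X, hz'r⟩ hne
    simp only [hgval] at hgz'
    linarith
  constructor
  · -- part (i)
    by_contra hcon
    push_neg at hcon
    have hcon' : ∀ n : ℕ, ∃ μ, (0 < μ ∧ μ ≤ 1 / (n + 1 : ℝ)) ∧ ∃ z ∈ K,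
        IsMinOn (fun y => f y + (Metric.infDist y X) ^ 2 / (2 * μ) + β / 2 * ‖y‖ ^ 2) K z ∧
        z ∉ Metric.ball xbar rmax := by
      intro n
      obtain ⟨μ, hμpos, hμle, hbad⟩ := hcon (1 / (n + 1 : ℝ)) (by positivity)
      obtain ⟨z, hzK, hzmin, hznb⟩ := hbad (hex μ)
      exact ⟨μ, ⟨hμpos, hμle⟩, z, hzK, hzmin, hznb⟩
    choose μ hμ z hzK hzmin hznb using hcon'
    have hμpos : ∀ n, 0 < μ n := fun n => (hμ n).1
    have hμ0 : Tendsto μ atTop (nhds 0) := by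
      apply squeeze_zero (fun n => (hμpos n).le) (fun n => (hμ n).2)
      exact tendsto_one_div_add_atTop_nhds_zero_nat
    have hle : ∀ n, f (z n) + (Metric.infDist (z n) X) ^ 2 / (2 * μ n) + β / 2 * ‖z n‖ ^ 2
        ≤ g xbar := by
      intro n
      have h := isMinOn_iff.mp (hzmin n) xbar hxbarK
      simp only [hdxbar] at h
      rw [hgval]
      have h0 : (0:ℝ) ^ 2 / (2 * μ n) = 0 := by simp
      rw [h0] at h
      linarith
    obtain ⟨z', hz'K, φ, hφ, hzφ⟩ := hKcpt.tendsto_subseq hzK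
    have hz'eq : z' = xbar :=
      key (μ ∘ φ) (z ∘ φ) z' (fun k => hμpos _) (hμ0.comp hφ.tendsto_atTop)
        (fun k => hzK _) (fun k => hle _) hzφ
    have hnorm : ∀ n, ‖z n - xbar‖ = rmax := by
      intro n
      have h1 : ‖z n - xbar‖ ≤ rmax := by
        have := hzK n; rwa [hK_def, Metric.mem_closedBall, dist_eq_norm] at this
      have h2 : ¬ ‖z n - xbar‖ < rmax := by
        have := hznb n; rwa [Metric.mem_ball, dist_eq_norm] at this
      linarith [lt_or_ge ‖z n - xbar‖ rmax |>.resolve_left h2, h1]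
    have h1 : Tendsto (fun k => ‖z (φ k) - xbar‖) atTop (nhds ‖z' - xbar‖) :=
      ((continuous_norm.comp (continuous_id.sub continuous_const)).tendsto z').comp hzφ
    have h2 : Tendsto (fun k => ‖z (φ k) - xbar‖) atTop (nhds rmax) := by
      simp only [hnorm]; exact tendsto_const_nhds
    have := tendsto_nhds_unique h1 h2
    rw [hz'eq, sub_self, norm_zero] at this
    linarith
  · -- part (ii)
    intro μ x hμpos hμ0 hxK hxmin
    have hle : ∀ k, f (x k) + (Metric.infDist (x k) X) ^ 2 / (2 * μ k) + β / 2 * ‖x k‖ ^ 2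
        ≤ g xbar := by
      intro k
      have h := isMinOn_iff.mp (hxmin k) xbar hxbarK
      simp only [hdxbar] at h
      rw [hgval]
      have h0 : (0:ℝ) ^ 2 / (2 * μ k) = 0 := by simp
      rw [h0] at h
      linarith
    have hxtend : Tendsto x atTop (nhds xbar) := by
      apply tendsto_of_subseq_tendsto
      intro ns hns
      obtain ⟨z', hz'K, φ, hφ, hzφ⟩ := hKcpt.tendsto_subseq (x := fun n => x (ns n))
        (fun n => hxK (ns n))
      have hz'eq : z' = xbar :=
        key (fun k => μ (ns (φ k))) (fun k => x (ns (φ k))) z'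
          (fun k => hμpos _) (hμ0.comp (hns.comp hφ.tendsto_atTop))
          (fun k => hxK _) (fun k => hle _) hzφ
      exact ⟨φ, hz'eq ▸ hzφ⟩
    refine ⟨hxtend, ?_⟩
    have hglow : Tendsto (fun k => g (x k)) atTop (nhds (g xbar)) :=
      ((hgc.tendsto xbar).comp hxtend)
    have hlow : ∀ k, g (x k) ≤ f (x k) + (Metric.infDist (x k) X) ^ 2 / (2 * μ k)
        + β / 2 * ‖x k‖ ^ 2 := by
      intro k
      have : (0:ℝ) ≤ (Metric.infDist (x k) X) ^ 2 / (2 * μ k) :=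
        div_nonneg (sq_nonneg _) (by have := hμpos k; linarith)
      rw [hgval]; linarith
    have : Tendsto (fun k => f (x k) + (Metric.infDist (x k) X) ^ 2 / (2 * μ k)
        + β / 2 * ‖x k‖ ^ 2) atTop (nhds (g xbar)) :=
      tendsto_of_tendsto_of_tendsto_of_le_of_le hglow tendsto_const_nhds hlow hle
    simpa only [hgval] using this
end

section
/- Let f be α-strongly convex and L-smooth with 0 < α < L, let γ, μ, β > 0, let X ⊆ E be nonempty and closed, and let x̄ ∈ E and r_max > 0 be such that ι̂_μ is convex on closedBall(x̄, r_max). Define T_μ as the Douglas–Rachford operator of the penalized problem. Set κ := max{(γL − 1)/(γL + 1), (1 − γα)/(γα + 1)} and κ' := (1 + κ)/2. Then κ' ∈ (0, 1) and for all z₁, z₂ ∈ B(x̄, r_max) one has ‖T_μ(z₁) − T_μ(z₂)‖ ≤ κ'·‖z₁ − z₂‖. -/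
open Set Metric

local notation "⟪" x ", " y "⟫" => @inner ℝ _ _ x y

section nexosAux

lemma nexos_nonneg_of_forall_small (D M : ℝ) (hM : 0 ≤ M)
    (h : ∀ t : ℝ, 0 < t → t ≤ 1 → 0 ≤ D + t * M) : 0 ≤ D := by
  by_contra h0
  push_neg at h0
  set r : ℝ := -D / (2 * (M + 1)) with hrdef
  have hr0 : 0 < r := div_pos (by linarith) (by linarith)
  have hr : r * (2 * (M + 1)) = -D := by
    rw [hrdef]; field_simp
  set t : ℝ := min 1 r with htdef
  have ht0 : 0 < t := lt_min one_pos hr0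
  have ht1 : t ≤ 1 := min_le_left _ _
  have htr : t ≤ r := min_le_right _ _
  have h' := h t ht0 ht1
  have hmul : t * M ≤ r * M := mul_le_mul_of_nonneg_right htr hM
  linarith

lemma nexos_kappa_nonneg {a b : ℝ} (ha : 0 < a) (hab : a < b) :
    0 ≤ max ((b - 1) / (b + 1)) ((1 - a) / (a + 1)) := by
  rcases le_total a 1 with h | h
  · exact le_trans (div_nonneg (by linarith) (by linarith)) (le_max_right _ _)
  · exact le_trans (div_nonneg (by linarith) (by linarith)) (le_max_left _ _)

lemma nexos_kappa_lt_one {a b : ℝ} (ha : 0 < a) (hab : a < b) :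
    max ((b - 1) / (b + 1)) ((1 - a) / (a + 1)) < 1 := by
  apply max_lt
  · rw [div_lt_one (by linarith)]; linarith
  · rw [div_lt_one (by linarith)]; linarith

lemma nexos_key_alg (a b S T C : ℝ) (ha : 0 < a) (hab : a < b)
    (hS : 0 ≤ S) (hT : 0 ≤ T)
    (hC : a * b * S + T ≤ (a + b) * C)
    (hCS : C ^ 2 ≤ S * T) :
    (1 - (max ((b - 1) / (b + 1)) ((1 - a) / (a + 1))) ^ 2) * (S + T)
      ≤ 2 * (1 + (max ((b - 1) / (b + 1)) ((1 - a) / (a + 1))) ^ 2) * C := by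
  set κ := max ((b - 1) / (b + 1)) ((1 - a) / (a + 1)) with hκdef
  have hb : 0 < b := lt_trans ha hab
  have hk0 : 0 ≤ κ := nexos_kappa_nonneg ha hab
  have hk1 : 1 - a ≤ (a + 1) * κ := by
    have := le_max_right ((b - 1) / (b + 1)) ((1 - a) / (a + 1))
    rw [div_le_iff₀ (by linarith)] at this
    calc 1 - a ≤ κ * (a + 1) := this
      _ = (a + 1) * κ := by ring
  have hk2 : b - 1 ≤ (b + 1) * κ := by
    have := le_max_left ((b - 1) / (b + 1)) ((1 - a) / (a + 1))
    rw [div_le_iff₀ (by linarith)] at this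
    linarith [this]
  have hC0 : 0 ≤ C := by nlinarith [mul_nonneg (mul_nonneg ha.le hb.le) hS]
  have hfact : (a ^ 2 * S - T) * (b ^ 2 * S - T) ≤ 0 := by
    have h1 : (a * b * S + T) ^ 2 ≤ ((a + b) * C) ^ 2 := by
      apply sq_le_sq'
      · nlinarith [mul_nonneg (mul_nonneg ha.le hb.le) hS]
      · exact hC
    have h2 : ((a + b) * C) ^ 2 = (a + b) ^ 2 * C ^ 2 := by ring
    nlinarith [h1, hCS, sq_nonneg (a + b)]
  have hT1 : a ^ 2 * S ≤ T := by
    by_contra h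
    push_neg at h
    have h1 : 0 < a ^ 2 * S - T := by linarith
    have h2 : a ^ 2 * S ≤ b ^ 2 * S :=
      mul_le_mul_of_nonneg_right (by nlinarith) hS
    nlinarith
  have hT2 : T ≤ b ^ 2 * S := by
    by_contra h
    push_neg at h
    have h2 : a ^ 2 * S ≤ b ^ 2 * S :=
      mul_le_mul_of_nonneg_right (by nlinarith) hS
    nlinarith
  have hmid : (1 - κ ^ 2) * ((a + b) * (S + T)) ≤ 2 * (1 + κ ^ 2) * (a * b * S + T) := by
    rcases le_total (a * b) 1 with hab1 | hab1
    · have ha1 : a ≤ 1 := by nlinarith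
      have hD : 0 ≤ (a + 1) * κ - (1 - a) := by linarith
      have h1 : 0 ≤ (1 - a * b) * (T - a ^ 2 * S) :=
        mul_nonneg (by linarith) (by linarith)
      have hM : 0 ≤ 2 * (a * b * S + T) + (a + b) * (S + T) := by
        nlinarith [mul_nonneg (mul_nonneg ha.le hb.le) hS]
      have h2 : 0 ≤ (2 * (1 - a)) * ((a + 1) * κ - (1 - a)) *
          (2 * (a * b * S + T) + (a + b) * (S + T)) :=
        mul_nonneg (mul_nonneg (by linarith) hD) hM
      have h3 : 0 ≤ ((a + 1) * κ - (1 - a)) ^ 2 *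
          (2 * (a * b * S + T) + (a + b) * (S + T)) :=
        mul_nonneg (sq_nonneg _) hM
      have hstep : (1 - κ ^ 2) * ((a + b) * (S + T)) * (a + 1) ^ 2
          ≤ 2 * (1 + κ ^ 2) * (a * b * S + T) * (a + 1) ^ 2 := by
        have e : 2 * (1 + κ ^ 2) * (a * b * S + T) * (a + 1) ^ 2
            - (1 - κ ^ 2) * ((a + b) * (S + T)) * (a + 1) ^ 2
            = 4 * ((1 - a * b) * (T - a ^ 2 * S))
              + (2 * (1 - a)) * ((a + 1) * κ - (1 - a)) *
                  (2 * (a * b * S + T) + (a + b) * (S + T))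
              + ((a + 1) * κ - (1 - a)) ^ 2 *
                  (2 * (a * b * S + T) + (a + b) * (S + T)) := by ring
        linarith [h1, h2, h3, e]
      have hpos : (0:ℝ) < (a + 1) ^ 2 := by positivity
      exact le_of_mul_le_mul_right hstep hpos
    · have hb1 : 1 ≤ b := by nlinarith
      have hD : 0 ≤ (b + 1) * κ - (b - 1) := by linarith
      have h1 : 0 ≤ (a * b - 1) * (b ^ 2 * S - T) :=
        mul_nonneg (by linarith) (by linarith)
      have hM : 0 ≤ 2 * (a * b * S + T) + (a + b) * (S + T) := by
        nlinarith [mul_nonneg (mul_nonneg ha.le hb.le) hS]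
      have h2 : 0 ≤ (2 * (b - 1)) * ((b + 1) * κ - (b - 1)) *
          (2 * (a * b * S + T) + (a + b) * (S + T)) :=
        mul_nonneg (mul_nonneg (by linarith) hD) hM
      have h3 : 0 ≤ ((b + 1) * κ - (b - 1)) ^ 2 *
          (2 * (a * b * S + T) + (a + b) * (S + T)) :=
        mul_nonneg (sq_nonneg _) hM
      have hstep : (1 - κ ^ 2) * ((a + b) * (S + T)) * (b + 1) ^ 2
          ≤ 2 * (1 + κ ^ 2) * (a * b * S + T) * (b + 1) ^ 2 := by
        have e : 2 * (1 + κ ^ 2) * (a * b * S + T) * (b + 1) ^ 2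
            - (1 - κ ^ 2) * ((a + b) * (S + T)) * (b + 1) ^ 2
            = 4 * ((a * b - 1) * (b ^ 2 * S - T))
              + (2 * (b - 1)) * ((b + 1) * κ - (b - 1)) *
                  (2 * (a * b * S + T) + (a + b) * (S + T))
              + ((b + 1) * κ - (b - 1)) ^ 2 *
                  (2 * (a * b * S + T) + (a + b) * (S + T)) := by ring
        linarith [h1, h2, h3, e]
      have hpos : (0:ℝ) < (b + 1) ^ 2 := by positivity
      exact le_of_mul_le_mul_right hstep hpos
  have h4 : 2 * (1 + κ ^ 2) * (a * b * S + T) ≤ 2 * (1 + κ ^ 2) * ((a + b) * C) := by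
    apply mul_le_mul_of_nonneg_left hC
    positivity
  have h5 : (1 - κ ^ 2) * ((a + b) * (S + T)) ≤ 2 * (1 + κ ^ 2) * ((a + b) * C) :=
    le_trans hmid h4
  have hpos : (0:ℝ) < a + b := by linarith
  have h6 : (1 - κ ^ 2) * (S + T) * (a + b) ≤ 2 * (1 + κ ^ 2) * C * (a + b) := by
    calc (1 - κ ^ 2) * (S + T) * (a + b) = (1 - κ ^ 2) * ((a + b) * (S + T)) := by ring
      _ ≤ 2 * (1 + κ ^ 2) * ((a + b) * C) := h5
      _ = 2 * (1 + κ ^ 2) * C * (a + b) := by ring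
  exact le_of_mul_le_mul_right h6 hpos

variable {E : Type*} [NormedAddCommGroup E] [InnerProductSpace ℝ E] [CompleteSpace E]

lemma nexos_hasGradientAt_quad (c : ℝ) (x : E) :
    HasGradientAt (fun y : E => c / 2 * ‖y‖ ^ 2) (c • x) x := by
  have heq : (fun y : E => c / 2 * ‖y‖ ^ 2) = (fun y : E => c / 2 * ⟪y, y⟫) := by
    funext y; rw [real_inner_self_eq_norm_sq]
  rw [heq, hasGradientAt_iff_hasFDerivAt]
  have h0 := ((hasFDerivAt_id x).inner ℝ (hasFDerivAt_id x)).const_mul (c / 2)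
  refine h0.congr_fderiv ?_
  ext v
  simp [fderivInnerCLM_apply, real_inner_comm, inner_smul_left]
  ring

lemma nexos_HasGradientAt.add' {f g : E → ℝ} {u v x : E} (hf : HasGradientAt f u x)
    (hg : HasGradientAt g v x) : HasGradientAt (fun y => f y + g y) (u + v) x := by
  rw [hasGradientAt_iff_hasFDerivAt] at *
  exact (hf.add hg).congr_fderiv (map_add _ u v).symm

lemma nexos_HasGradientAt.sub' {f g : E → ℝ} {u v x : E} (hf : HasGradientAt f u x)
    (hg : HasGradientAt g v x) : HasGradientAt (fun y => f y - g y) (u - v) x := by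
  rw [hasGradientAt_iff_hasFDerivAt] at *
  exact (hf.sub hg).congr_fderiv (map_sub _ u v).symm

lemma nexos_hasGradientAt_quad_shift (c : ℝ) (z x : E) :
    HasGradientAt (fun y : E => c / 2 * ‖y - z‖ ^ 2) (c • (x - z)) x := by
  have h := (nexos_hasGradientAt_quad c (x - z)).hasFDerivAt
  have hcomp := h.comp x ((hasFDerivAt_id x).sub_const z)
  rw [hasGradientAt_iff_hasFDerivAt]
  exact hcomp.congr_fderiv (ContinuousLinearMap.comp_id _)

lemma nexos_hasDerivAt_line (g : E → ℝ) (G : E → E) (hg : ∀ y, HasGradientAt g (G y) y)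
    (x d : E) (t : ℝ) :
    HasDerivAt (fun s : ℝ => g (x + s • d)) ⟪G (x + t • d), d⟫ t := by
  have hc : HasDerivAt (fun s : ℝ => x + s • d) d t := by
    simpa using ((hasDerivAt_id t).smul_const d).const_add x
  have := (hg (x + t • d)).hasFDerivAt.comp_hasDerivAt t hc
  exact this

lemma nexos_convex_grad_ineq (g : E → ℝ) (G : E → E) (hconv : ConvexOn ℝ univ g)
    (hg : ∀ y, HasGradientAt g (G y) y) (x y : E) :
    g x + ⟪G x, y - x⟫ ≤ g y := by
  set φ : ℝ → ℝ := fun s => g (x + s • (y - x)) with hφ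
  have hφconv : ConvexOn ℝ univ φ := by
    have h := hconv.comp_affineMap (AffineMap.lineMap x y : ℝ →ᵃ[ℝ] E)
    have heq : (g ∘ (AffineMap.lineMap x y : ℝ →ᵃ[ℝ] E)) = φ := by
      funext s
      simp only [hφ, Function.comp_apply, AffineMap.lineMap_apply_module]
      congr 1
      rw [smul_sub, sub_smul, one_smul]; abel
    rw [heq] at h
    simpa using h
  have hder : HasDerivAt φ ⟪G x, y - x⟫ 0 := by
    have := nexos_hasDerivAt_line g G hg x (y - x) 0
    simpa using this
  have hs := hφconv.le_slope_of_hasDerivAt (mem_univ 0) (mem_univ 1) one_pos hder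
  rw [slope_def_field] at hs
  have h0 : φ 0 = g x := by simp [hφ]
  have h1 : φ 1 = g y := by simp [hφ]
  rw [h0, h1] at hs
  simp at hs
  linarith

lemma nexos_convexOn_of_monotone_grad (g : E → ℝ) (G : E → E)
    (hg : ∀ y, HasGradientAt g (G y) y)
    (hm : ∀ x y, 0 ≤ ⟪G x - G y, x - y⟫) : ConvexOn ℝ univ g := by
  refine ⟨convex_univ, ?_⟩
  intro x _ y _ a b ha hb hab
  set φ : ℝ → ℝ := fun s => g (x + s • (y - x)) with hφ
  have hder : ∀ t : ℝ, HasDerivAt φ ⟪G (x + t • (y - x)), y - x⟫ t := fun t =>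
    nexos_hasDerivAt_line g G hg x (y - x) t
  have hdiff : Differentiable ℝ φ := fun t => (hder t).differentiableAt
  have hmono : Monotone (deriv φ) := by
    intro s t hst
    rw [(hder s).deriv, (hder t).deriv]
    rcases eq_or_lt_of_le hst with h | h
    · rw [h]
    have hsub : (x + t • (y - x)) - (x + s • (y - x)) = (t - s) • (y - x) := by
      rw [sub_smul]; abel
    have h2 := hm (x + t • (y - x)) (x + s • (y - x))
    rw [hsub, real_inner_smul_right, inner_sub_left] at h2
    nlinarith [sub_pos.mpr h]
  have hφconv : ConvexOn ℝ univ φ := hmono.convexOn_univ_of_deriv hdiff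
  have hc := hφconv.2 (mem_univ (0 : ℝ)) (mem_univ (1 : ℝ)) ha hb hab
  have h0 : φ 0 = g x := by simp [hφ]
  have h1 : φ 1 = g y := by simp [hφ]
  have harg : a • (0:ℝ) + b • (1:ℝ) = b := by simp
  rw [harg, h0, h1] at hc
  have hxy : x + b • (y - x) = a • x + b • y := by
    have : a = 1 - b := by linarith
    rw [this, sub_smul, one_smul, smul_sub]; abel
  calc g (a • x + b • y) = φ b := by rw [hφ]; simp only []; rw [hxy]
    _ ≤ a * g x + b * g y := hc

lemma nexos_cocoercivity (g : E → ℝ) (G : E → E) (c : ℝ) (hc : 0 < c)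
    (hg : ∀ y, HasGradientAt g (G y) y)
    (hconv : ConvexOn ℝ univ g)
    (hsm : ConvexOn ℝ univ (fun y => c / 2 * ‖y‖ ^ 2 - g y)) (x y : E) :
    ‖G x - G y‖ ^ 2 ≤ c * ⟪G x - G y, x - y⟫ := by
  have hgh : ∀ y : E, HasGradientAt (fun v => c / 2 * ‖v‖ ^ 2 - g v) (c • y - G y) y :=
    fun y => nexos_HasGradientAt.sub' (nexos_hasGradientAt_quad c y) (hg y)
  have hdesc : ∀ x y : E, g y ≤ g x + ⟪G x, y - x⟫ + c / 2 * ‖y - x‖ ^ 2 := by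
    intro x y
    have h1 := nexos_convex_grad_ineq _ _ hsm hgh x y
    have hexp : ‖y‖ ^ 2 = ‖x‖ ^ 2 + 2 * ⟪x, y - x⟫ + ‖y - x‖ ^ 2 := by
      have h := norm_add_sq_real x (y - x)
      rw [add_sub_cancel] at h
      linarith
    rw [inner_sub_left, real_inner_smul_left, hexp] at h1
    nlinarith
  have key : ∀ x y : E, g x + ⟪G x, y - x⟫ + 1 / (2 * c) * ‖G y - G x‖ ^ 2 ≤ g y := by
    intro x y
    set z := y - c⁻¹ • (G y - G x) with hz
    have h1 := nexos_convex_grad_ineq g G hconv hg x z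
    have h2 := hdesc y z
    have hzy : z - y = -(c⁻¹ • (G y - G x)) := by rw [hz]; abel
    have hzx : z - x = (y - x) - c⁻¹ • (G y - G x) := by rw [hz]; abel
    have e1 : ⟪G x, z - x⟫ = ⟪G x, y - x⟫ - c⁻¹ * ⟪G x, G y - G x⟫ := by
      rw [hzx, inner_sub_right, real_inner_smul_right]
    have e2 : ⟪G y, z - y⟫ = -(c⁻¹ * ⟪G y, G y - G x⟫) := by
      rw [hzy, inner_neg_right, real_inner_smul_right]
    have e3 : ‖z - y‖ ^ 2 = c⁻¹ ^ 2 * ‖G y - G x‖ ^ 2 := by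
      rw [hzy, norm_neg, norm_smul, mul_pow, Real.norm_eq_abs, sq_abs]
    have e4 : ⟪G y, G y - G x⟫ - ⟪G x, G y - G x⟫ = ‖G y - G x‖ ^ 2 := by
      rw [← inner_sub_left, real_inner_self_eq_norm_sq]
    rw [e1] at h1
    rw [e2, e3] at h2
    have hc' : c ≠ 0 := ne_of_gt hc
    have hfe : c / 2 * (c⁻¹ ^ 2 * ‖G y - G x‖ ^ 2) = 1 / (2 * c) * ‖G y - G x‖ ^ 2 := by
      field_simp
    have hfe2 : c⁻¹ * ⟪G y, G y - G x⟫ - c⁻¹ * ⟪G x, G y - G x⟫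
        = c⁻¹ * ‖G y - G x‖ ^ 2 := by rw [← mul_sub, e4]
    have hfe3 : c⁻¹ * ‖G y - G x‖ ^ 2 - 1 / (2 * c) * ‖G y - G x‖ ^ 2
        = 1 / (2 * c) * ‖G y - G x‖ ^ 2 := by field_simp; ring
    nlinarith [h1, h2]
  have k1 := key x y
  have k2 := key y x
  have hnr : ‖G x - G y‖ = ‖G y - G x‖ := norm_sub_rev _ _
  have hi : ⟪G x, y - x⟫ + ⟪G y, x - y⟫ = -⟪G x - G y, x - y⟫ := by
    rw [inner_sub_left]
    have : ⟪G x, y - x⟫ = -⟪G x, x - y⟫ := by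
      rw [← inner_neg_right, neg_sub]
    rw [this]; ring
  have hcc : 1 / (2 * c) * ‖G y - G x‖ ^ 2 + 1 / (2 * c) * ‖G x - G y‖ ^ 2
      = c⁻¹ * ‖G x - G y‖ ^ 2 := by rw [hnr]; field_simp; ring
  have hfin : c⁻¹ * ‖G x - G y‖ ^ 2 ≤ ⟪G x - G y, x - y⟫ := by linarith
  calc ‖G x - G y‖ ^ 2 = c * (c⁻¹ * ‖G x - G y‖ ^ 2) := by
        field_simp
    _ ≤ c * ⟪G x - G y, x - y⟫ := mul_le_mul_of_nonneg_left hfin hc.le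

lemma nexos_combined_ineq (f : E → ℝ) (f' : E → E) (α L : ℝ) (hα : 0 < α) (hαL : α < L)
    (hsc : ConvexOn ℝ Set.univ (fun y => f y - α / 2 * ‖y‖ ^ 2))
    (hgrad : ∀ x, HasGradientAt f (f' x) x)
    (hlip : ∀ x y, ‖f' x - f' y‖ ≤ L * ‖x - y‖) (x y : E) :
    ‖f' x - f' y‖ ^ 2 + α * L * ‖x - y‖ ^ 2 ≤ (α + L) * ⟪f' x - f' y, x - y⟫ := by
  set g : E → ℝ := fun y => f y - α / 2 * ‖y‖ ^ 2 with hgdef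
  set G : E → E := fun y => f' y - α • y with hGdef
  have hgg : ∀ y : E, HasGradientAt g (G y) y := fun y =>
    nexos_HasGradientAt.sub' (hgrad y) (nexos_hasGradientAt_quad α y)
  have hGsub : ∀ x y : E, G x - G y = (f' x - f' y) - α • (x - y) := by
    intro x y; simp only [hGdef]; rw [smul_sub]; abel
  have hsm : ConvexOn ℝ univ (fun y => (L - α) / 2 * ‖y‖ ^ 2 - g y) := by
    apply nexos_convexOn_of_monotone_grad _ (fun y => (L - α) • y - G y)
      (fun y => nexos_HasGradientAt.sub' (nexos_hasGradientAt_quad (L - α) y) (hgg y))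
    intro x y
    have h1 : ((L - α) • x - G x) - ((L - α) • y - G y)
        = L • (x - y) - (f' x - f' y) := by
      have h0 : (L - α) • x - G x - ((L - α) • y - G y)
          = (L - α) • (x - y) - (G x - G y) := by module
      rw [h0, hGsub x y]
      simp only [smul_sub, sub_smul]
      abel
    rw [h1, inner_sub_left, real_inner_smul_left, real_inner_self_eq_norm_sq]
    have h2 : ⟪f' x - f' y, x - y⟫ ≤ ‖f' x - f' y‖ * ‖x - y‖ := real_inner_le_norm _ _
    nlinarith [hlip x y, norm_nonneg (x - y), norm_nonneg (f' x - f' y)]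
  have hco := nexos_cocoercivity g G (L - α) (by linarith) hgg hsc hsm x y
  rw [hGsub x y] at hco
  have e1 : ‖(f' x - f' y) - α • (x - y)‖ ^ 2
      = ‖f' x - f' y‖ ^ 2 - 2 * (α * ⟪f' x - f' y, x - y⟫) + α ^ 2 * ‖x - y‖ ^ 2 := by
    rw [norm_sub_sq_real, real_inner_smul_right, norm_smul, mul_pow, Real.norm_eq_abs, sq_abs]
  have e2 : ⟪(f' x - f' y) - α • (x - y), x - y⟫
      = ⟪f' x - f' y, x - y⟫ - α * ‖x - y‖ ^ 2 := by
    rw [inner_sub_left, real_inner_smul_left, real_inner_self_eq_norm_sq]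
  rw [e1, e2] at hco
  nlinarith [hco]

lemma nexos_min_VI (C : Set E) (hCconv : Convex ℝ C) (φ : E → ℝ) (hφ : ConvexOn ℝ C φ)
    (γ : ℝ) (hγ : 0 < γ) (w u : E) (hu : u ∈ C)
    (hmin : IsMinOn (fun y => φ y + 1 / (2 * γ) * ‖y - w‖ ^ 2) C u) :
    ∀ y ∈ C, ⟪w - u, y - u⟫ ≤ γ * (φ y - φ u) := by
  intro y hy
  have key : ∀ t : ℝ, 0 < t → t ≤ 1 →
      0 ≤ (φ y - φ u + γ⁻¹ * ⟪u - w, y - u⟫) + t * (1 / (2 * γ) * ‖y - u‖ ^ 2) := by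
    intro t ht0 ht1
    have e : (1 - t) • u + t • y = u + t • (y - u) := by
      rw [sub_smul, one_smul, smul_sub]; abel
    have hyt : u + t • (y - u) ∈ C := by
      have h := hCconv hu hy (by linarith : (0:ℝ) ≤ 1 - t) ht0.le (by ring)
      rwa [e] at h
    have hmin' := isMinOn_iff.mp hmin _ hyt
    have hφt : φ (u + t • (y - u)) ≤ (1 - t) * φ u + t * φ y := by
      have h := hφ.2 hu hy (by linarith : (0:ℝ) ≤ 1 - t) ht0.le (by ring)
      rw [e] at h
      simpa using h
    have hnorm : ‖(u + t • (y - u)) - w‖ ^ 2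
        = ‖u - w‖ ^ 2 + t * (2 * ⟪u - w, y - u⟫) + t ^ 2 * ‖y - u‖ ^ 2 := by
      have e2 : (u + t • (y - u)) - w = (u - w) + t • (y - u) := by abel
      rw [e2, norm_add_sq_real, real_inner_smul_right, norm_smul, mul_pow,
        Real.norm_eq_abs, sq_abs]
      ring
    rw [hnorm] at hmin'
    have h2 : 0 ≤ t * ((φ y - φ u + γ⁻¹ * ⟪u - w, y - u⟫)
        + t * (1 / (2 * γ) * ‖y - u‖ ^ 2)) := by
      have hre : t * ((φ y - φ u + γ⁻¹ * ⟪u - w, y - u⟫)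
            + t * (1 / (2 * γ) * ‖y - u‖ ^ 2))
          = (((1 - t) * φ u + t * φ y) + 1 / (2 * γ) * (‖u - w‖ ^ 2
              + t * (2 * ⟪u - w, y - u⟫) + t ^ 2 * ‖y - u‖ ^ 2))
            - (φ u + 1 / (2 * γ) * ‖u - w‖ ^ 2) := by
        field_simp
        ring
      rw [hre]
      linarith [hφt, hmin']
    by_contra hneg
    push_neg at hneg
    nlinarith [mul_pos ht0 (neg_pos.mpr hneg)]
  have hD := nexos_nonneg_of_forall_small _ _
    (by positivity : (0:ℝ) ≤ 1 / (2 * γ) * ‖y - u‖ ^ 2) key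
  have hip : ⟪w - u, y - u⟫ = -⟪u - w, y - u⟫ := by
    rw [← neg_sub u w, inner_neg_left]
  rw [hip]
  have hmm := mul_le_mul_of_nonneg_left hD hγ.le
  have hg : γ * (γ⁻¹ * ⟪u - w, y - u⟫) = ⟪u - w, y - u⟫ := by
    field_simp
  nlinarith [hmm, hg]


lemma nexos_firm_of_VI (Cs : Set E) (φ : E → ℝ) (γ : ℝ)
    (q : E → E) (hqmem : ∀ w : E, q w ∈ Cs)
    (hVI : ∀ w : E, ∀ y ∈ Cs, ⟪w - q w, y - q w⟫ ≤ γ * (φ y - φ (q w))) :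
    ∀ w₁ w₂ : E, ‖q w₁ - q w₂‖ ^ 2 ≤ ⟪w₁ - w₂, q w₁ - q w₂⟫ := by
  intro w₁ w₂
  have h1 := hVI w₁ (q w₂) (hqmem w₂)
  have h2 := hVI w₂ (q w₁) (hqmem w₁)
  rw [← real_inner_self_eq_norm_sq]
  simp only [inner_sub_left, inner_sub_right] at h1 h2 ⊢
  linarith [real_inner_comm (q w₁) (q w₂), real_inner_comm w₁ (q w₁),
    real_inner_comm w₁ (q w₂), real_inner_comm w₂ (q w₁), real_inner_comm w₂ (q w₂)]

lemma nexos_refl_nonexpansive (q : E → E)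
    (hfirm : ∀ w₁ w₂ : E, ‖q w₁ - q w₂‖ ^ 2 ≤ ⟪w₁ - w₂, q w₁ - q w₂⟫) :
    ∀ w₁ w₂ : E, ‖((2:ℝ) • q w₁ - w₁) - ((2:ℝ) • q w₂ - w₂)‖ ≤ ‖w₁ - w₂‖ := by
  intro w₁ w₂
  have hf := hfirm w₁ w₂
  have he : ((2:ℝ) • q w₁ - w₁) - ((2:ℝ) • q w₂ - w₂)
      = (2:ℝ) • (q w₁ - q w₂) - (w₁ - w₂) := by module
  have hsq2 : ‖(2:ℝ) • (q w₁ - q w₂) - (w₁ - w₂)‖ ^ 2 ≤ ‖w₁ - w₂‖ ^ 2 := by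
    rw [norm_sub_sq_real, real_inner_smul_left, norm_smul, mul_pow,
      Real.norm_eq_abs, sq_abs]
    have hcm := real_inner_comm (q w₁ - q w₂) (w₁ - w₂)
    nlinarith [hf, hcm]
  rw [he]
  have h := Real.sqrt_le_sqrt hsq2
  rwa [Real.sqrt_sq (norm_nonneg _), Real.sqrt_sq (norm_nonneg _)] at h

lemma nexos_prox_stat (f : E → ℝ) (f' : E → E) (γ : ℝ) (hγ : 0 < γ)
    (hgrad : ∀ x, HasGradientAt f (f' x) x) (proxf : E → E)
    (hproxf : ∀ z : E,
      IsMinOn (fun y => f y + 1 / (2 * γ) * ‖y - z‖ ^ 2) Set.univ (proxf z)) :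
    ∀ z : E, z = proxf z + γ • f' (proxf z) := by
  intro z
  have hloc : IsLocalMin (fun y => f y + 1 / (2 * γ) * ‖y - z‖ ^ 2) (proxf z) :=
    (hproxf z).isLocalMin Filter.univ_mem
  have hgr : HasGradientAt (fun y => f y + 1 / (2 * γ) * ‖y - z‖ ^ 2)
      (f' (proxf z) + γ⁻¹ • (proxf z - z)) (proxf z) := by
    have heq : (fun y : E => f y + 1 / (2 * γ) * ‖y - z‖ ^ 2)
        = (fun y : E => f y + γ⁻¹ / 2 * ‖y - z‖ ^ 2) := by
      funext y
      have : (1:ℝ) / (2 * γ) = γ⁻¹ / 2 := by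
        rw [inv_eq_one_div]; ring
      rw [this]
    rw [heq]
    exact nexos_HasGradientAt.add' (hgrad (proxf z))
      (nexos_hasGradientAt_quad_shift γ⁻¹ z (proxf z))
  have hz0 : f' (proxf z) + γ⁻¹ • (proxf z - z) = 0 := by
    have h0 := hloc.hasFDerivAt_eq_zero hgr.hasFDerivAt
    have h1 := congrArg (InnerProductSpace.toDual ℝ E).symm h0
    simpa using h1
  have h2 := congrArg (fun v : E => γ • v) hz0
  simp only [smul_add, smul_smul, smul_zero] at h2
  rw [mul_inv_cancel₀ (ne_of_gt hγ), one_smul] at h2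
  rw [← sub_eq_zero]
  rw [show z - (proxf z + γ • f' (proxf z))
    = -(γ • f' (proxf z) + (proxf z - z)) by abel, h2, neg_zero]

end nexosAux

/-- The Douglas–Rachford operator `T_μ` of the penalized problem is
`κ'`-contractive on the open ball `B(xbar, rmax)` on which `ι̂_μ` is convex,
with `κ' = (1 + κ)/2` and `κ = max{(γL−1)/(γL+1), (1−γα)/(γα+1)}`. -/
theorem nexos_DRS_operator_contractive
    {E : Type*} [NormedAddCommGroup E] [InnerProductSpace ℝ E] [FiniteDimensional ℝ E]
    (X : Set E) (hXne : X.Nonempty) (hXcl : IsClosed X)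
    (f : E → ℝ) (f' : E → E) (α L β γ μ : ℝ)
    (hα : 0 < α) (hαL : α < L)
    (hsc : ConvexOn ℝ Set.univ (fun y => f y - α / 2 * ‖y‖ ^ 2))
    (hgrad : ∀ x, HasGradientAt f (f' x) x)
    (hlip : ∀ x y, ‖f' x - f' y‖ ≤ L * ‖x - y‖)
    (hβ : 0 < β) (hγ : 0 < γ) (hμ : 0 < μ)
    (xbar : E) (rmax : ℝ) (hrmax : 0 < rmax)
    -- `ι̂_μ` is convex on the closed ball
    (hpenconv : ConvexOn ℝ (Metric.closedBall xbar rmax)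
      (fun y => (Metric.infDist y X) ^ 2 / (2 * μ) + β / 2 * ‖y‖ ^ 2))
    -- `proxf z` is the unique minimizer of `y ↦ f(y) + (1/(2γ))‖y − z‖²` over `E`
    (proxf : E → E)
    (hproxf : ∀ z : E,
      IsMinOn (fun y => f y + 1 / (2 * γ) * ‖y - z‖ ^ 2) Set.univ (proxf z))
    (hproxfu : ∀ z y : E,
      IsMinOn (fun w => f w + 1 / (2 * γ) * ‖w - z‖ ^ 2) Set.univ y → y = proxf z)
    -- `q w` is the unique minimizer of `y ↦ ι̂_μ(y) + (1/(2γ))‖y − w‖²` over the closed ball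
    (q : E → E)
    (hq : ∀ w : E, q w ∈ Metric.closedBall xbar rmax ∧
      IsMinOn (fun y => (Metric.infDist y X) ^ 2 / (2 * μ) + β / 2 * ‖y‖ ^ 2
          + 1 / (2 * γ) * ‖y - w‖ ^ 2) (Metric.closedBall xbar rmax) (q w))
    (hqu : ∀ w y : E, y ∈ Metric.closedBall xbar rmax →
      IsMinOn (fun v => (Metric.infDist v X) ^ 2 / (2 * μ) + β / 2 * ‖v‖ ^ 2
          + 1 / (2 * γ) * ‖v - w‖ ^ 2) (Metric.closedBall xbar rmax) y → y = q w) :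
    (0 < (1 + max ((γ * L - 1) / (γ * L + 1)) ((1 - γ * α) / (γ * α + 1))) / 2 ∧
      (1 + max ((γ * L - 1) / (γ * L + 1)) ((1 - γ * α) / (γ * α + 1))) / 2 < 1) ∧
    ∀ z₁ ∈ Metric.ball xbar rmax, ∀ z₂ ∈ Metric.ball xbar rmax,
      ‖(q ((2 : ℝ) • proxf z₁ - z₁) + z₁ - proxf z₁)
          - (q ((2 : ℝ) • proxf z₂ - z₂) + z₂ - proxf z₂)‖ ≤
        (1 + max ((γ * L - 1) / (γ * L + 1)) ((1 - γ * α) / (γ * α + 1))) / 2 * ‖z₁ - z₂‖ := by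
  have ha : 0 < γ * α := by positivity
  have hab : γ * α < γ * L := by nlinarith
  have hκ0 : 0 ≤ max ((γ * L - 1) / (γ * L + 1)) ((1 - γ * α) / (γ * α + 1)) :=
    nexos_kappa_nonneg ha hab
  have hκ1 : max ((γ * L - 1) / (γ * L + 1)) ((1 - γ * α) / (γ * α + 1)) < 1 :=
    nexos_kappa_lt_one ha hab
  set κ := max ((γ * L - 1) / (γ * L + 1)) ((1 - γ * α) / (γ * α + 1)) with hκdef
  refine ⟨⟨by linarith, by linarith⟩, ?_⟩
  intro z₁ _ z₂ _
  have hstat : ∀ z : E, z = proxf z + γ • f' (proxf z) :=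
    nexos_prox_stat f f' γ hγ hgrad proxf hproxf
  set p₁ := proxf z₁ with hp₁def
  set p₂ := proxf z₂ with hp₂def
  have h₁ : z₁ = p₁ + γ • f' p₁ := hstat z₁
  have h₂ : z₂ = p₂ + γ • f' p₂ := hstat z₂
  have hzz : z₁ - z₂ = (p₁ - p₂) + γ • (f' p₁ - f' p₂) := by
    rw [h₁, h₂, smul_sub]; abel
  have hww : ((2:ℝ) • p₁ - z₁) - ((2:ℝ) • p₂ - z₂)
      = (p₁ - p₂) - γ • (f' p₁ - f' p₂) := by
    rw [h₁, h₂, smul_sub]; module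
  -- contraction of the reflected prox step
  have hcomb := nexos_combined_ineq f f' α L hα hαL hsc hgrad hlip p₁ p₂
  have hT : ‖γ • (f' p₁ - f' p₂)‖ ^ 2 = γ ^ 2 * ‖f' p₁ - f' p₂‖ ^ 2 := by
    rw [norm_smul, mul_pow, Real.norm_eq_abs, sq_abs]
  have hCe : ⟪p₁ - p₂, γ • (f' p₁ - f' p₂)⟫ = γ * ⟪f' p₁ - f' p₂, p₁ - p₂⟫ := by
    rw [real_inner_smul_right, real_inner_comm]
  have hCineq : (γ * α) * (γ * L) * ‖p₁ - p₂‖ ^ 2 + ‖γ • (f' p₁ - f' p₂)‖ ^ 2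
      ≤ (γ * α + γ * L) * ⟪p₁ - p₂, γ • (f' p₁ - f' p₂)⟫ := by
    rw [hT, hCe]
    have := mul_le_mul_of_nonneg_left hcomb (sq_nonneg γ)
    nlinarith [this]
  have hCS : ⟪p₁ - p₂, γ • (f' p₁ - f' p₂)⟫ ^ 2
      ≤ ‖p₁ - p₂‖ ^ 2 * ‖γ • (f' p₁ - f' p₂)‖ ^ 2 := by
    nlinarith [real_inner_mul_inner_self_le (p₁ - p₂) (γ • (f' p₁ - f' p₂)),
      real_inner_self_eq_norm_sq (p₁ - p₂),
      real_inner_self_eq_norm_sq (γ • (f' p₁ - f' p₂))]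
  have hkey := nexos_key_alg (γ * α) (γ * L) (‖p₁ - p₂‖ ^ 2) (‖γ • (f' p₁ - f' p₂)‖ ^ 2)
    (⟪p₁ - p₂, γ • (f' p₁ - f' p₂)⟫) ha hab (sq_nonneg _) (sq_nonneg _) hCineq hCS
  rw [← hκdef] at hkey
  have hsqc : ‖(p₁ - p₂) - γ • (f' p₁ - f' p₂)‖ ^ 2
      ≤ κ ^ 2 * ‖(p₁ - p₂) + γ • (f' p₁ - f' p₂)‖ ^ 2 := by
    rw [norm_sub_sq_real, norm_add_sq_real]
    linarith [hkey]
  have hcontr : ‖(p₁ - p₂) - γ • (f' p₁ - f' p₂)‖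
      ≤ κ * ‖(p₁ - p₂) + γ • (f' p₁ - f' p₂)‖ := by
    have h := Real.sqrt_le_sqrt hsqc
    rw [Real.sqrt_sq (norm_nonneg _),
      show κ ^ 2 * ‖(p₁ - p₂) + γ • (f' p₁ - f' p₂)‖ ^ 2
        = (κ * ‖(p₁ - p₂) + γ • (f' p₁ - f' p₂)‖) ^ 2 by ring,
      Real.sqrt_sq (mul_nonneg hκ0 (norm_nonneg _))] at h
    exact h
  -- firm nonexpansiveness of q
  have hVI : ∀ w : E, ∀ y ∈ Metric.closedBall xbar rmax,
      ⟪w - q w, y - q w⟫ ≤ γ * ((Metric.infDist y X) ^ 2 / (2 * μ) + β / 2 * ‖y‖ ^ 2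
        - ((Metric.infDist (q w) X) ^ 2 / (2 * μ) + β / 2 * ‖q w‖ ^ 2)) := by
    intro w
    exact nexos_min_VI _ (convex_closedBall xbar rmax)
      (fun y => (Metric.infDist y X) ^ 2 / (2 * μ) + β / 2 * ‖y‖ ^ 2)
      hpenconv γ hγ w (q w) (hq w).1 (hq w).2
  have hfirm : ∀ w₁ w₂ : E, ‖q w₁ - q w₂‖ ^ 2 ≤ ⟪w₁ - w₂, q w₁ - q w₂⟫ :=
    nexos_firm_of_VI (Metric.closedBall xbar rmax)
      (fun y => (Metric.infDist y X) ^ 2 / (2 * μ) + β / 2 * ‖y‖ ^ 2) γ q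
      (fun w => (hq w).1) hVI
  have hrefl : ∀ w₁ w₂ : E,
      ‖((2:ℝ) • q w₁ - w₁) - ((2:ℝ) • q w₂ - w₂)‖ ≤ ‖w₁ - w₂‖ :=
    nexos_refl_nonexpansive q hfirm
  -- assemble
  set w₁ : E := (2:ℝ) • p₁ - z₁ with hw₁def
  set w₂ : E := (2:ℝ) • p₂ - z₂ with hw₂def
  have hrepr : (q w₁ + z₁ - p₁) - (q w₂ + z₂ - p₂)
      = ((1:ℝ)/2) • ((z₁ - z₂) + (((2:ℝ) • q w₁ - w₁) - ((2:ℝ) • q w₂ - w₂))) := by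
    rw [hw₁def, hw₂def]; module
  have hw12 : ‖w₁ - w₂‖ ≤ κ * ‖z₁ - z₂‖ := by
    rw [hw₁def, hw₂def, hww, hzz]
    exact hcontr
  calc ‖(q w₁ + z₁ - p₁) - (q w₂ + z₂ - p₂)‖
      = ‖((1:ℝ)/2) • ((z₁ - z₂) + (((2:ℝ) • q w₁ - w₁) - ((2:ℝ) • q w₂ - w₂)))‖ := by
        rw [hrepr]
    _ = (1/2) * ‖(z₁ - z₂) + (((2:ℝ) • q w₁ - w₁) - ((2:ℝ) • q w₂ - w₂))‖ := by
        rw [norm_smul, Real.norm_eq_abs]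
        norm_num
    _ ≤ (1/2) * (‖z₁ - z₂‖ + ‖((2:ℝ) • q w₁ - w₁) - ((2:ℝ) • q w₂ - w₂)‖) := by
        have := norm_add_le (z₁ - z₂) (((2:ℝ) • q w₁ - w₁) - ((2:ℝ) • q w₂ - w₂))
        linarith
    _ ≤ (1/2) * (‖z₁ - z₂‖ + ‖w₁ - w₂‖) := by
        have := hrefl w₁ w₂
        linarith
    _ ≤ (1/2) * (‖z₁ - z₂‖ + κ * ‖z₁ - z₂‖) := by linarith [hw12]
    _ = (1 + κ) / 2 * ‖z₁ - z₂‖ := by ring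
end

section
/- Let f be α-strongly convex and L-smooth with 0 < α < L, let γ, β > 0, let X ⊆ E be nonempty and compact, let Π be a projection selection onto X, and let T_μ be the inner-algorithm (NExOS) operator. Then for every x̄ ∈ E, every r_max > 0 and every μ_max > 0 there exists ℓ > 0 such that for all μ₁, μ₂ ∈ (0, μ_max] and all x ∈ B(x̄, r_max) one has ‖T_{μ₁}(x) − T_{μ₂}(x)‖ ≤ ℓ·|μ₁ − μ₂|. -/
/-- The inner-algorithm (NExOS) operator `T_μ` with projection selection `proj`
onto `X`: with `κ := 1/(βγ+1)` and `θ_μ := μ/(γκ+μ)`,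
`T_μ(z) := z + θ_μ·κ·(2·prox_{γf}(z) − z) + (1 − θ_μ)·proj(κ·(2·prox_{γf}(z) − z)) − prox_{γf}(z)`. -/
noncomputable def nexosT {E : Type*} [NormedAddCommGroup E] [InnerProductSpace ℝ E]
    (proxf proj : E → E) (β γ μ : ℝ) (z : E) : E :=
  z + (μ / (γ * (1 / (β * γ + 1)) + μ)) • ((1 / (β * γ + 1)) • ((2 : ℝ) • proxf z - z))
    + (1 - μ / (γ * (1 / (β * γ + 1)) + μ)) • proj ((1 / (β * γ + 1)) • ((2 : ℝ) • proxf z - z))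
    - proxf z

open RealInnerProductSpace

set_option maxHeartbeats 1000000 in
lemma prox_sq_lip {E : Type*} [NormedAddCommGroup E] [InnerProductSpace ℝ E]
    (f : E → ℝ) (α γ : ℝ) (hα : 0 < α) (hγ : 0 < γ)
    (hsc : ConvexOn ℝ Set.univ (fun y => f y - α / 2 * ‖y‖ ^ 2))
    (proxf : E → E)
    (hproxf : ∀ z : E,
      IsMinOn (fun y => f y + 1 / (2 * γ) * ‖y - z‖ ^ 2) Set.univ (proxf z))
    (z₁ z₂ : E) :
    α * γ * ‖proxf z₁ - proxf z₂‖ ^ 2 ≤ ‖z₁ - z₂‖ ^ 2 := by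
  set p₁ := proxf z₁ with hp1def
  set p₂ := proxf z₂ with hp2def
  set m := (1/2 : ℝ) • p₁ + (1/2 : ℝ) • p₂ with hm
  set q := p₁ - p₂ with hq
  have h1 : f p₁ + 1 / (2 * γ) * ‖p₁ - z₁‖ ^ 2 ≤ f m + 1 / (2 * γ) * ‖m - z₁‖ ^ 2 :=
    isMinOn_iff.mp (hproxf z₁) m (Set.mem_univ m)
  have h2 : f p₂ + 1 / (2 * γ) * ‖p₂ - z₂‖ ^ 2 ≤ f m + 1 / (2 * γ) * ‖m - z₂‖ ^ 2 :=
    isMinOn_iff.mp (hproxf z₂) m (Set.mem_univ m)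
  have hc := hsc.2 (Set.mem_univ p₁) (Set.mem_univ p₂)
      (by norm_num : (0:ℝ) ≤ 1/2) (by norm_num : (0:ℝ) ≤ 1/2) (by norm_num)
  simp only [smul_eq_mul, ← hm] at hc
  have hp₁ : p₁ = m + (1/2 : ℝ) • q := by rw [hm, hq]; module
  have hp₂ : p₂ = m - (1/2 : ℝ) • q := by rw [hm, hq]; module
  have e1 : ‖p₁ - z₁‖ ^ 2 = ‖m - z₁‖ ^ 2 + ⟪m - z₁, q⟫ + (1/4) * ‖q‖ ^ 2 := by
    have h : p₁ - z₁ = (m - z₁) + (1/2 : ℝ) • q := by rw [hp₁]; abel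
    rw [h, norm_add_sq_real, real_inner_smul_right, norm_smul]
    norm_num
    ring
  have e2 : ‖p₂ - z₂‖ ^ 2 = ‖m - z₂‖ ^ 2 - ⟪m - z₂, q⟫ + (1/4) * ‖q‖ ^ 2 := by
    have h : p₂ - z₂ = (m - z₂) - (1/2 : ℝ) • q := by rw [hp₂]; abel
    rw [h, norm_sub_sq_real, real_inner_smul_right, norm_smul]
    norm_num
    ring
  have e3 : ‖p₁‖ ^ 2 + ‖p₂‖ ^ 2 = 2 * ‖m‖ ^ 2 + (1/2) * ‖q‖ ^ 2 := by
    conv_lhs => rw [hp₁, hp₂]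
    rw [norm_add_sq_real, norm_sub_sq_real, norm_smul]
    norm_num
    ring
  have hc2 : 2 * f m ≤ f p₁ + f p₂ - α/4 * ‖q‖^2 := by
    have e3' : α/2 * (‖p₁‖^2 + ‖p₂‖^2) = α * ‖m‖^2 + α/4 * ‖q‖^2 := by rw [e3]; ring
    nlinarith [hc]
  have e4' : 1/(2*γ) * ⟪m - z₁, q⟫ - 1/(2*γ) * ⟪m - z₂, q⟫ = 1/(2*γ) * ⟪z₂ - z₁, q⟫ := by
    have e4 : ⟪m - z₁, q⟫ - ⟪m - z₂, q⟫ = ⟪z₂ - z₁, q⟫ := by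
      rw [← inner_sub_left]; congr 1; abel
    rw [← e4]; ring
  rw [e1] at h1
  rw [e2] at h2
  have key0 : 1/(2*γ) * (⟪z₂ - z₁, q⟫ + (1/2) * ‖q‖^2) + α/4 * ‖q‖^2 ≤ 0 := by
    ring_nf at h1 h2 e4' ⊢
    linarith [h1, h2, hc2, e4']
  have key : ⟪z₂ - z₁, q⟫ + (1/2) * ‖q‖ ^ 2 + (α * γ / 2) * ‖q‖ ^ 2 ≤ 0 := by
    have h2γ : (0:ℝ) < 2 * γ := by positivity
    have := mul_le_mul_of_nonneg_left key0 h2γ.le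
    have hexp : 2 * γ * (1/(2*γ) * (⟪z₂ - z₁, q⟫ + (1/2) * ‖q‖^2) + α/4 * ‖q‖^2)
        = ⟪z₂ - z₁, q⟫ + (1/2) * ‖q‖ ^ 2 + (α * γ / 2) * ‖q‖ ^ 2 := by
      field_simp
      ring
    rw [hexp] at this
    linarith
  have cauchy : -(‖z₁ - z₂‖ * ‖q‖) ≤ ⟪z₂ - z₁, q⟫ := by
    have h := abs_real_inner_le_norm (z₂ - z₁) q
    rw [norm_sub_rev z₂ z₁] at h
    linarith [neg_abs_le ⟪z₂ - z₁, q⟫]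
  nlinarith [key, cauchy, sq_nonneg (‖z₁ - z₂‖ - ‖q‖)]

set_option maxHeartbeats 1000000 in
/-- The NExOS operator `T_μ(x)` is Lipschitz continuous in the
penalty parameter `μ`, uniformly over any ball. -/
theorem nexos_operator_lipschitz_in_mu
    {E : Type*} [NormedAddCommGroup E] [InnerProductSpace ℝ E] [FiniteDimensional ℝ E]
    (X : Set E) (hXne : X.Nonempty) (hXcp : IsCompact X)
    (f : E → ℝ) (f' : E → E) (α L β γ : ℝ)
    (hα : 0 < α) (hαL : α < L)
    (hsc : ConvexOn ℝ Set.univ (fun y => f y - α / 2 * ‖y‖ ^ 2))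
    (hgrad : ∀ x, HasGradientAt f (f' x) x)
    (hlip : ∀ x y, ‖f' x - f' y‖ ≤ L * ‖x - y‖)
    (hβ : 0 < β) (hγ : 0 < γ)
    (proxf : E → E)
    (hproxf : ∀ z : E,
      IsMinOn (fun y => f y + 1 / (2 * γ) * ‖y - z‖ ^ 2) Set.univ (proxf z))
    (hproxfu : ∀ z y : E,
      IsMinOn (fun w => f w + 1 / (2 * γ) * ‖w - z‖ ^ 2) Set.univ y → y = proxf z)
    -- `proj` is a projection selection onto `X`
    (proj : E → E)
    (hproj : ∀ w : E, proj w ∈ X ∧ ‖w - proj w‖ = Metric.infDist w X) :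
    ∀ (xbar : E) (rmax μmax : ℝ), 0 < rmax → 0 < μmax →
      ∃ ℓ > (0 : ℝ), ∀ μ₁ μ₂ : ℝ, 0 < μ₁ → μ₁ ≤ μmax → 0 < μ₂ → μ₂ ≤ μmax →
        ∀ x ∈ Metric.ball xbar rmax,
          ‖nexosT proxf proj β γ μ₁ x - nexosT proxf proj β γ μ₂ x‖ ≤ ℓ * |μ₁ - μ₂| := by
  intro xbar rmax μmax hr hμmax
  obtain ⟨x₀, hx₀⟩ := hXne
  have hβγ : (0:ℝ) < β * γ + 1 := by positivity
  set κ : ℝ := 1 / (β * γ + 1) with hκdef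
  have hκpos : 0 < κ := by positivity
  have hκle : κ ≤ 1 := by
    rw [hκdef, div_le_one hβγ]
    nlinarith
  set c : ℝ := γ * κ with hcdef
  have hc : 0 < c := by positivity
  set s : ℝ := Real.sqrt (1 / (α * γ)) with hsdef
  have hs : 0 ≤ s := Real.sqrt_nonneg _
  set M : ℝ := ‖proxf xbar‖ + rmax * s with hMdef
  have hM0 : 0 ≤ M := by positivity
  set R : ℝ := ‖x₀‖ + (2 * M + ‖xbar‖ + rmax) with hRdef
  have hR : 0 < R := by positivity
  refine ⟨R / c, by positivity, ?_⟩
  intro μ₁ μ₂ hμ₁ hμ₁' hμ₂ hμ₂' x hx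
  have hxd : ‖x - xbar‖ ≤ rmax := by
    have := Metric.mem_ball.mp hx
    rw [dist_eq_norm] at this
    linarith
  -- bound on proxf x
  have hpx : ‖proxf x - proxf xbar‖ ≤ rmax * s := by
    have h1 := prox_sq_lip f α γ hα hγ hsc proxf hproxf x xbar
    have hs2 : s ^ 2 = 1 / (α * γ) := Real.sq_sqrt (by positivity)
    have h2 : ‖proxf x - proxf xbar‖ ^ 2 ≤ (rmax * s) ^ 2 := by
      have hxr : ‖x - xbar‖ ^ 2 ≤ rmax ^ 2 := by
        have := norm_nonneg (x - xbar)
        nlinarith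
      have hαγ : 0 < α * γ := by positivity
      rw [mul_pow, hs2, mul_one_div, le_div_iff₀ hαγ]
      nlinarith
    exact le_of_pow_le_pow_left₀ two_ne_zero (by positivity) h2
  have hpxb : ‖proxf x‖ ≤ M := by
    calc ‖proxf x‖ ≤ ‖proxf xbar‖ + ‖proxf x - proxf xbar‖ := by
          have := norm_add_le (proxf xbar) (proxf x - proxf xbar)
          simpa using this
      _ ≤ M := by rw [hMdef]; linarith
  set v : E := (2 : ℝ) • proxf x - x with hvdef
  set w : E := κ • v with hwdef
  have hwnorm : ‖w‖ ≤ 2 * M + ‖xbar‖ + rmax := by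
    have hv : ‖v‖ ≤ 2 * M + ‖xbar‖ + rmax := by
      have h1 : ‖v‖ ≤ 2 * ‖proxf x‖ + ‖x‖ := by
        calc ‖v‖ ≤ ‖(2:ℝ) • proxf x‖ + ‖x‖ := norm_sub_le _ _
          _ = 2 * ‖proxf x‖ + ‖x‖ := by rw [norm_smul]; norm_num
      have h2 : ‖x‖ ≤ ‖xbar‖ + rmax := by
        calc ‖x‖ ≤ ‖xbar‖ + ‖x - xbar‖ := by
              have := norm_add_le xbar (x - xbar); simpa using this
          _ ≤ ‖xbar‖ + rmax := by linarith
      linarith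
    calc ‖w‖ = κ * ‖v‖ := by
          rw [hwdef, norm_smul, Real.norm_eq_abs, abs_of_pos hκpos]
      _ ≤ 1 * ‖v‖ := by
          apply mul_le_mul_of_nonneg_right hκle (norm_nonneg v)
      _ = ‖v‖ := one_mul _
      _ ≤ _ := hv
  have hwP : ‖w - proj w‖ ≤ R := by
    rw [(hproj w).2]
    calc Metric.infDist w X ≤ dist w x₀ := Metric.infDist_le_dist_of_mem hx₀
      _ = ‖w - x₀‖ := dist_eq_norm _ _
      _ ≤ ‖w‖ + ‖x₀‖ := norm_sub_le _ _
      _ ≤ R := by rw [hRdef]; linarith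
  have hdiff : nexosT proxf proj β γ μ₁ x - nexosT proxf proj β γ μ₂ x
      = (μ₁ / (c + μ₁) - μ₂ / (c + μ₂)) • (w - proj w) := by
    simp only [nexosT, hwdef, hvdef, hcdef, hκdef]
    module
  rw [hdiff, norm_smul, Real.norm_eq_abs]
  have hθ : |μ₁ / (c + μ₁) - μ₂ / (c + μ₂)| ≤ |μ₁ - μ₂| / c := by
    have hd1 : (0:ℝ) < c + μ₁ := by linarith
    have hd2 : (0:ℝ) < c + μ₂ := by linarith
    have heq : μ₁ / (c + μ₁) - μ₂ / (c + μ₂) = c * (μ₁ - μ₂) / ((c + μ₁) * (c + μ₂)) := by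
      field_simp
      ring
    rw [heq, abs_div, abs_mul, abs_of_pos hc, abs_of_pos (mul_pos hd1 hd2)]
    have h1 : c * c ≤ (c + μ₁) * (c + μ₂) := by nlinarith
    calc c * |μ₁ - μ₂| / ((c + μ₁) * (c + μ₂)) ≤ c * |μ₁ - μ₂| / (c * c) := by
          apply div_le_div_of_nonneg_left (by positivity) (by positivity) h1
      _ = |μ₁ - μ₂| / c := by field_simp
  calc |μ₁ / (c + μ₁) - μ₂ / (c + μ₂)| * ‖w - proj w‖
      ≤ (|μ₁ - μ₂| / c) * R :=
        mul_le_mul hθ hwP (norm_nonneg _) (by positivity)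
    _ = R / c * |μ₁ - μ₂| := by ring
end

section
/- Let f be α-strongly convex and L-smooth with 0 < α < L, let γ, μ, β > 0, let X ⊆ E be nonempty and closed, and let x̄ ∈ E and r_max > 0 be such that ι̂_μ is convex on closedBall(x̄, r_max) and such that f + ι̂_μ has a unique minimizer x_μ over closedBall(x̄, r_max), which lies in the open ball B(x̄, r_max). Define T_μ as the Douglas–Rachford operator of the penalized problem. Then for every z ∈ B(x̄, r_max): T_μ(z) = z if and only if z = x_μ + γ∇f(x_μ); moreover prox_{γf}(x_μ + γ∇f(x_μ)) = x_μ. Consequently, the fixed-point set of T_μ intersected with B(x̄, r_max) contains at most one point, and if x_μ + γ∇f(x_μ) ∈ B(x̄, r_max), then this intersection equals {x_μ + γ∇f(x_μ)} and its image under prox_{γf} is the singleton {x_μ}. -/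
set_option maxHeartbeats 1000000
open RealInnerProductSpace

lemma aux_nonneg {a c : ℝ} (hc : 0 ≤ c)
    (h : ∀ t : ℝ, 0 < t → t ≤ 1 → 0 ≤ a + t * c) : 0 ≤ a := by
  by_contra h'
  push_neg at h'
  have hc1 : (0:ℝ) < c + 1 := by linarith
  have hpos : 0 < -a / (2 * (c + 1)) := div_pos (by linarith) (by linarith)
  set t := min 1 (-a / (2 * (c + 1))) with htdef
  have ht0 : 0 < t := lt_min one_pos hpos
  have h1 := h t ht0 (min_le_left _ _)
  have h2 : t * c ≤ (-a / (2 * (c + 1))) * c :=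
    mul_le_mul_of_nonneg_right (min_le_right _ _) hc
  have h3 : (-a / (2 * (c + 1))) * c ≤ (-a / (2 * (c + 1))) * (c + 1) :=
    mul_le_mul_of_nonneg_left (by linarith) hpos.le
  have h4 : (-a / (2 * (c + 1))) * (c + 1) = -a / 2 := by field_simp
  linarith

lemma aux_div {t x : ℝ} (ht : 0 < t) (h : 0 ≤ t * x) : 0 ≤ x := by
  by_contra hx; push_neg at hx; nlinarith

lemma grad_ineq {E : Type*} [NormedAddCommGroup E] [InnerProductSpace ℝ E] [CompleteSpace E]
    {g : E → ℝ} {gx : E} {x : E}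
    (hconv : ConvexOn ℝ Set.univ g) (hg : HasGradientAt g gx x) (y : E) :
    g x + ⟪gx, y - x⟫ ≤ g y := by
  set φ : ℝ → ℝ := fun t => g (x + t • (y - x)) with hφdef
  have hline : HasDerivAt (fun t : ℝ => x + t • (y - x)) (y - x) 0 := by
    simpa using ((hasDerivAt_id (0:ℝ)).smul_const (y - x)).const_add x
  have hfd : HasFDerivAt g (InnerProductSpace.toDual ℝ E gx) x :=
    hasGradientAt_iff_hasFDerivAt.mp hg
  have h0 : x + (0:ℝ) • (y - x) = x := by simp
  have hφ : HasDerivAt φ (⟪gx, y - x⟫) 0 := by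
    have := (h0 ▸ hfd).comp_hasDerivAt 0 hline
    simp only [InnerProductSpace.toDual_apply_apply] at this
    exact this
  have hφ0 : φ 0 = g x := by simp [hφdef]
  have hslope : ∀ t ∈ Set.Ioc (0:ℝ) 1, slope φ 0 t ≤ g y - g x := by
    intro t ht
    have hcs := hconv.2 (Set.mem_univ x) (Set.mem_univ y)
      (by linarith [ht.2] : (0:ℝ) ≤ 1 - t) ht.1.le (by ring)
    have hpt : (1 - t) • x + t • y = x + t • (y - x) := by module
    rw [hpt] at hcs
    have hd : φ t - φ 0 ≤ t * (g y - g x) := by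
      simp only [smul_eq_mul] at hcs
      simp only [hφdef, h0]
      nlinarith [hcs]
    rw [slope_def_field, sub_zero, div_le_iff₀ ht.1]
    linarith [hd]
  have htend : Filter.Tendsto (slope φ 0) (nhdsWithin 0 (Set.Ioi 0)) (nhds (⟪gx, y - x⟫)) :=
    (hasDerivAt_iff_tendsto_slope.mp hφ).mono_left
      (nhdsWithin_mono _ (fun t ht => ne_of_gt ht))
  have hev : ∀ᶠ t in nhdsWithin (0:ℝ) (Set.Ioi 0), slope φ 0 t ≤ g y - g x :=
    Filter.eventually_of_mem (Ioc_mem_nhdsGT_of_mem (by norm_num)) hslope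
  have := le_of_tendsto htend hev
  linarith



/-- Relationship between the unique local minimum `xμ` of the
penalized problem over the ball and the fixed-point set of the
Douglas–Rachford operator `T_μ` of the penalized problem. -/
theorem nexos_fixed_point_relationship
    {E : Type*} [NormedAddCommGroup E] [InnerProductSpace ℝ E] [FiniteDimensional ℝ E]
    (X : Set E) (hXne : X.Nonempty) (hXcl : IsClosed X)
    (f : E → ℝ) (f' : E → E) (α L β γ μ : ℝ)
    (hα : 0 < α) (hαL : α < L)
    (hsc : ConvexOn ℝ Set.univ (fun y => f y - α / 2 * ‖y‖ ^ 2))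
    (hgrad : ∀ x, HasGradientAt f (f' x) x)
    (hlip : ∀ x y, ‖f' x - f' y‖ ≤ L * ‖x - y‖)
    (hβ : 0 < β) (hγ : 0 < γ) (hμ : 0 < μ)
    (xbar : E) (rmax : ℝ) (hrmax : 0 < rmax)
    -- `ι̂_μ` is convex on the closed ball
    (hpenconv : ConvexOn ℝ (Metric.closedBall xbar rmax)
      (fun y => (Metric.infDist y X) ^ 2 / (2 * μ) + β / 2 * ‖y‖ ^ 2))
    -- `xμ` is the unique minimizer of `f + ι̂_μ` over the closed ball, and lies in the open ball
    (xμ : E) (hxμball : xμ ∈ Metric.ball xbar rmax)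
    (hxμmin : IsMinOn (fun y => f y + (Metric.infDist y X) ^ 2 / (2 * μ) + β / 2 * ‖y‖ ^ 2)
      (Metric.closedBall xbar rmax) xμ)
    (hxμuniq : ∀ y ∈ Metric.closedBall xbar rmax,
      IsMinOn (fun w => f w + (Metric.infDist w X) ^ 2 / (2 * μ) + β / 2 * ‖w‖ ^ 2)
        (Metric.closedBall xbar rmax) y → y = xμ)
    -- `proxf z` is the unique minimizer of `y ↦ f(y) + (1/(2γ))‖y − z‖²` over `E`
    (proxf : E → E)
    (hproxf : ∀ z : E,
      IsMinOn (fun y => f y + 1 / (2 * γ) * ‖y - z‖ ^ 2) Set.univ (proxf z))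
    (hproxfu : ∀ z y : E,
      IsMinOn (fun w => f w + 1 / (2 * γ) * ‖w - z‖ ^ 2) Set.univ y → y = proxf z)
    -- `q w` is the unique minimizer of `y ↦ ι̂_μ(y) + (1/(2γ))‖y − w‖²` over the closed ball
    (q : E → E)
    (hq : ∀ w : E, q w ∈ Metric.closedBall xbar rmax ∧
      IsMinOn (fun y => (Metric.infDist y X) ^ 2 / (2 * μ) + β / 2 * ‖y‖ ^ 2
          + 1 / (2 * γ) * ‖y - w‖ ^ 2) (Metric.closedBall xbar rmax) (q w))
    (hqu : ∀ w y : E, y ∈ Metric.closedBall xbar rmax →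
      IsMinOn (fun v => (Metric.infDist v X) ^ 2 / (2 * μ) + β / 2 * ‖v‖ ^ 2
          + 1 / (2 * γ) * ‖v - w‖ ^ 2) (Metric.closedBall xbar rmax) y → y = q w) :
    (∀ z ∈ Metric.ball xbar rmax,
      (q ((2 : ℝ) • proxf z - z) + z - proxf z = z ↔ z = xμ + γ • f' xμ)) ∧
    proxf (xμ + γ • f' xμ) = xμ ∧
    ({z : E | q ((2 : ℝ) • proxf z - z) + z - proxf z = z} ∩ Metric.ball xbar rmax).Subsingleton ∧
    (xμ + γ • f' xμ ∈ Metric.ball xbar rmax →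
      {z : E | q ((2 : ℝ) • proxf z - z) + z - proxf z = z} ∩ Metric.ball xbar rmax
        = {xμ + γ • f' xμ} ∧
      proxf '' ({z : E | q ((2 : ℝ) • proxf z - z) + z - proxf z = z} ∩ Metric.ball xbar rmax)
        = {xμ}) := by
  have hK : Convex ℝ (Metric.closedBall xbar rmax) := convex_closedBall _ _
  have hxμK : xμ ∈ Metric.closedBall xbar rmax := Metric.ball_subset_closedBall hxμball
  have hL0 : (0:ℝ) < L := lt_trans hα hαL
  set g0 : E → ℝ := fun y => (Metric.infDist y X) ^ 2 / (2 * μ) + β / 2 * ‖y‖ ^ 2 with hg0def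
  -- convexity of f
  have hsq : ConvexOn ℝ (Set.univ : Set E) (fun y : E => α / 2 * ‖y‖ ^ 2) := by
    refine ⟨convex_univ, ?_⟩
    intro u _ v _ a b ha hb hab
    simp only [smul_eq_mul]
    have h1 : ‖a • u + b • v‖ ≤ a * ‖u‖ + b * ‖v‖ := by
      calc ‖a • u + b • v‖ ≤ ‖a • u‖ + ‖b • v‖ := norm_add_le _ _
        _ = a * ‖u‖ + b * ‖v‖ := by
            rw [norm_smul, norm_smul, Real.norm_of_nonneg ha, Real.norm_of_nonneg hb]
    have h2 : ‖a • u + b • v‖ ^ 2 ≤ (a * ‖u‖ + b * ‖v‖) ^ 2 :=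
      pow_le_pow_left₀ (norm_nonneg _) h1 2
    have hb1 : b = 1 - a := by linarith
    subst hb1
    have h3 : (a * ‖u‖ + (1 - a) * ‖v‖) ^ 2 ≤ a * ‖u‖ ^ 2 + (1 - a) * ‖v‖ ^ 2 := by
      nlinarith [mul_nonneg (mul_nonneg ha hb) (sq_nonneg (‖u‖ - ‖v‖))]
    have h4 := mul_le_mul_of_nonneg_left (h2.trans h3) (by positivity : (0:ℝ) ≤ α / 2)
    linarith
  have hfconv : ConvexOn ℝ (Set.univ : Set E) f := by
    have hadd := hsc.add hsq
    have heq : ((fun y : E => f y - α / 2 * ‖y‖ ^ 2) + fun y : E => α / 2 * ‖y‖ ^ 2) = f := by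
      funext y; simp
    rwa [heq] at hadd
  have hgi : ∀ x y : E, f x + ⟪f' x, y - x⟫ ≤ f y := fun x y =>
    grad_ineq hfconv (hgrad x) y
  -- L1 : prox of x + γ f'(x) is x
  have hprox_of : ∀ x : E, proxf (x + γ • f' x) = x := by
    intro x
    refine (hproxfu (x + γ • f' x) x (isMinOn_iff.mpr ?_)).symm
    intro y _
    show f x + 1 / (2 * γ) * ‖x - (x + γ • f' x)‖ ^ 2
      ≤ f y + 1 / (2 * γ) * ‖y - (x + γ • f' x)‖ ^ 2
    have hxz : x - (x + γ • f' x) = -(γ • f' x) := by abel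
    have hyz : y - (x + γ • f' x) = (y - x) + -(γ • f' x) := by abel
    have hn : ‖(y - x) + -(γ • f' x)‖ ^ 2
        = ‖y - x‖ ^ 2 - 2 * γ * ⟪f' x, y - x⟫ + ‖γ • f' x‖ ^ 2 := by
      rw [norm_add_sq_real, inner_neg_right, real_inner_smul_right, norm_neg,
        real_inner_comm (y - x) (f' x)]
      ring
    rw [hxz, hyz, hn, norm_neg]
    have hexp : 1 / (2 * γ) * (‖y - x‖ ^ 2 - 2 * γ * ⟪f' x, y - x⟫ + ‖γ • f' x‖ ^ 2)
        = 1 / (2 * γ) * ‖y - x‖ ^ 2 - ⟪f' x, y - x⟫ + 1 / (2 * γ) * ‖γ • f' x‖ ^ 2 := by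
      field_simp
    rw [hexp]
    have hgixy := hgi x y
    have hpos : 0 ≤ 1 / (2 * γ) * ‖y - x‖ ^ 2 := by positivity
    linarith
  -- L2 : prox stationarity
  have hprox_stat : ∀ z : E, z = proxf z + γ • f' (proxf z) := by
    intro z
    set p := proxf z with hpdef
    have hmin := isMinOn_iff.mp (hproxf z)
    have key : ∀ v : E, 0 ≤ 2 * γ * ⟪f' p, v⟫ + 2 * ⟪p - z, v⟫ := by
      intro v
      refine aux_nonneg (c := (2 * γ * L + 1) * ‖v‖ ^ 2) (by positivity) ?_
      intro t ht0 ht1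
      have e1 : f p + 1 / (2 * γ) * ‖p - z‖ ^ 2
          ≤ f (p + t • v) + 1 / (2 * γ) * ‖p + t • v - z‖ ^ 2 := hmin (p + t • v) (Set.mem_univ _)
      have hcancel : ∀ r : ℝ, 2 * γ * (1 / (2 * γ) * r) = r := fun r => by field_simp
      have e1' : 2 * γ * f p + ‖p - z‖ ^ 2
          ≤ 2 * γ * f (p + t • v) + ‖p + t • v - z‖ ^ 2 := by
        have h := mul_le_mul_of_nonneg_left e1 (by positivity : (0:ℝ) ≤ 2 * γ)
        calc 2 * γ * f p + ‖p - z‖ ^ 2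
            = 2 * γ * (f p + 1 / (2 * γ) * ‖p - z‖ ^ 2) := by rw [mul_add, hcancel]
          _ ≤ 2 * γ * (f (p + t • v) + 1 / (2 * γ) * ‖p + t • v - z‖ ^ 2) := h
          _ = _ := by rw [mul_add, hcancel]
      have hn : ‖p + t • v - z‖ ^ 2
          = ‖p - z‖ ^ 2 + 2 * t * ⟪p - z, v⟫ + t ^ 2 * ‖v‖ ^ 2 := by
        have hrw : p + t • v - z = (p - z) + t • v := by abel
        rw [hrw, norm_add_sq_real, real_inner_smul_right, norm_smul,
          Real.norm_of_nonneg ht0.le, mul_pow]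
        ring
      have hf1 : f (p + t • v) ≤ f p + t * ⟪f' (p + t • v), v⟫ := by
        have h := hgi (p + t • v) p
        have h2 : p - (p + t • v) = -(t • v) := by abel
        rw [h2, inner_neg_right, real_inner_smul_right] at h
        linarith
      have hf2 : t * ⟪f' (p + t • v), v⟫ ≤ t * ⟪f' p, v⟫ + L * t ^ 2 * ‖v‖ ^ 2 := by
        have h3 : ⟪f' (p + t • v) - f' p, v⟫ ≤ ‖f' (p + t • v) - f' p‖ * ‖v‖ :=
          real_inner_le_norm _ _
        have h4 : ‖f' (p + t • v) - f' p‖ ≤ L * (t * ‖v‖) := by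
          have h5 := hlip (p + t • v) p
          rw [add_sub_cancel_left, norm_smul, Real.norm_of_nonneg ht0.le] at h5
          exact h5
        have h6 : ⟪f' (p + t • v) - f' p, v⟫ ≤ L * (t * ‖v‖) * ‖v‖ :=
          h3.trans (mul_le_mul_of_nonneg_right h4 (norm_nonneg v))
        have h7 : ⟪f' (p + t • v) - f' p, v⟫ = ⟪f' (p + t • v), v⟫ - ⟪f' p, v⟫ :=
          inner_sub_left _ _ _
        rw [h7] at h6
        have := mul_le_mul_of_nonneg_left h6 ht0.le
        nlinarith [this]
      have hcomb : 0 ≤ t * ((2 * γ * ⟪f' p, v⟫ + 2 * ⟪p - z, v⟫)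
          + t * ((2 * γ * L + 1) * ‖v‖ ^ 2)) := by
        rw [hn] at e1'
        have hf1' := mul_le_mul_of_nonneg_left hf1 (by positivity : (0:ℝ) ≤ 2 * γ)
        have hf2' := mul_le_mul_of_nonneg_left hf2 (by positivity : (0:ℝ) ≤ 2 * γ)
        nlinarith [e1', hf1', hf2']
      exact aux_div ht0 hcomb
    have hu : γ • f' p + (p - z) = 0 := by
      have h := key (-(γ • f' p + (p - z)))
      rw [inner_neg_right, inner_neg_right] at h
      have he : ⟪γ • f' p + (p - z), γ • f' p + (p - z)⟫
          = γ * ⟪f' p, γ • f' p + (p - z)⟫ + ⟪p - z, γ • f' p + (p - z)⟫ := by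
        rw [inner_add_left, real_inner_smul_left]
      have hle : ⟪γ • f' p + (p - z), γ • f' p + (p - z)⟫ ≤ 0 := by
        rw [he]; nlinarith [h]
      exact real_inner_self_nonpos.mp hle
    have h2 : (p + γ • f' p) - z = 0 := by rw [← hu]; abel
    exact (sub_eq_zero.mp h2).symm
  -- Fact A : first-order condition for g0 at xμ
  have hA : ∀ y ∈ Metric.closedBall xbar rmax, 0 ≤ g0 y - g0 xμ + ⟪f' xμ, y - xμ⟫ := by
    intro y hyK
    refine aux_nonneg (c := L * ‖y - xμ‖ ^ 2) (by positivity) ?_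
    intro t ht0 ht1
    set yt := xμ + t • (y - xμ) with hytdef
    have hytK : yt ∈ Metric.closedBall xbar rmax := by
      have hpt : (1 - t) • xμ + t • y = yt := by rw [hytdef]; module
      rw [← hpt]
      exact hK hxμK hyK (by linarith) ht0.le (by ring)
    have hm := isMinOn_iff.mp hxμmin yt hytK
    have hcs : g0 yt ≤ (1 - t) * g0 xμ + t * g0 y := by
      have hpt : (1 - t) • xμ + t • y = yt := by rw [hytdef]; module
      have := hpenconv.2 hxμK hyK (by linarith : (0:ℝ) ≤ 1 - t) ht0.le (by ring)
      rw [hpt] at this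
      simpa using this
    have hf1 : f yt ≤ f xμ + t * ⟪f' yt, y - xμ⟫ := by
      have h := hgi yt xμ
      have h2 : xμ - yt = -(t • (y - xμ)) := by rw [hytdef]; abel
      rw [h2, inner_neg_right, real_inner_smul_right] at h
      linarith
    have hf2 : t * ⟪f' yt, y - xμ⟫ ≤ t * ⟪f' xμ, y - xμ⟫ + L * t ^ 2 * ‖y - xμ‖ ^ 2 := by
      have h3 : ⟪f' yt - f' xμ, y - xμ⟫ ≤ ‖f' yt - f' xμ‖ * ‖y - xμ‖ := real_inner_le_norm _ _
      have h4 : ‖f' yt - f' xμ‖ ≤ L * (t * ‖y - xμ‖) := by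
        have h5 := hlip yt xμ
        rw [hytdef, add_sub_cancel_left, norm_smul, Real.norm_of_nonneg ht0.le] at h5
        exact h5
      have h6 : ⟪f' yt - f' xμ, y - xμ⟫ ≤ L * (t * ‖y - xμ‖) * ‖y - xμ‖ :=
        h3.trans (mul_le_mul_of_nonneg_right h4 (norm_nonneg _))
      rw [inner_sub_left] at h6
      have := mul_le_mul_of_nonneg_left h6 ht0.le
      nlinarith [this]
    have hgm : f xμ + g0 xμ ≤ f yt + g0 yt := by
      have h := hm
      beta_reduce at h
      simp only [hg0def]
      linarith [h]
    have hcomb : 0 ≤ t * ((g0 y - g0 xμ + ⟪f' xμ, y - xμ⟫) + t * (L * ‖y - xμ‖ ^ 2)) := by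
      nlinarith [hgm, hcs, hf1, hf2]
    exact aux_div ht0 hcomb
  -- L3 : q (xμ - γ f' xμ) = xμ
  have hq3 : q (xμ - γ • f' xμ) = xμ := by
    refine (hqu (xμ - γ • f' xμ) xμ hxμK (isMinOn_iff.mpr ?_)).symm
    intro y hyK
    show g0 xμ + 1 / (2 * γ) * ‖xμ - (xμ - γ • f' xμ)‖ ^ 2
      ≤ g0 y + 1 / (2 * γ) * ‖y - (xμ - γ • f' xμ)‖ ^ 2
    have hxw : xμ - (xμ - γ • f' xμ) = γ • f' xμ := by abel
    have hyw : y - (xμ - γ • f' xμ) = (y - xμ) + γ • f' xμ := by abel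
    have hn : ‖(y - xμ) + γ • f' xμ‖ ^ 2
        = ‖y - xμ‖ ^ 2 + 2 * γ * ⟪f' xμ, y - xμ⟫ + ‖γ • f' xμ‖ ^ 2 := by
      rw [norm_add_sq_real, real_inner_smul_right, real_inner_comm (y - xμ) (f' xμ)]
      ring
    rw [hxw, hyw, hn]
    have hexp : 1 / (2 * γ) * (‖y - xμ‖ ^ 2 + 2 * γ * ⟪f' xμ, y - xμ⟫ + ‖γ • f' xμ‖ ^ 2)
        = 1 / (2 * γ) * ‖y - xμ‖ ^ 2 + ⟪f' xμ, y - xμ⟫ + 1 / (2 * γ) * ‖γ • f' xμ‖ ^ 2 := by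
      field_simp
    rw [hexp]
    have hAy := hA y hyK
    have hpos : 0 ≤ 1 / (2 * γ) * ‖y - xμ‖ ^ 2 := by positivity
    simp only [hg0def] at hAy ⊢
    linarith
  have hpz : proxf (xμ + γ • f' xμ) = xμ := hprox_of xμ
  -- forward direction
  have hfwd : q ((2 : ℝ) • proxf (xμ + γ • f' xμ) - (xμ + γ • f' xμ)) + (xμ + γ • f' xμ)
      - proxf (xμ + γ • f' xμ) = xμ + γ • f' xμ := by
    rw [hpz]
    have h2 : (2:ℝ) • xμ - (xμ + γ • f' xμ) = xμ - γ • f' xμ := by module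
    rw [h2, hq3]
    abel
  -- converse direction
  have hconv4 : ∀ z ∈ Metric.ball xbar rmax,
      q ((2 : ℝ) • proxf z - z) + z - proxf z = z → z = xμ + γ • f' xμ := by
    intro z hzball hTz
    set p := proxf z with hpdef
    set w := (2 : ℝ) • p - z with hwdef
    have hqwp : q w = p := by
      calc q w = (q w + z - p) + p - z := by abel
        _ = z + p - z := by rw [hTz]
        _ = p := by abel
    have hpK : p ∈ Metric.closedBall xbar rmax := hqwp ▸ (hq w).1
    have hz : z = p + γ • f' p := hprox_stat z
    have hw : p - w = γ • f' p := by rw [hwdef, hz]; module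
    have hqmin := isMinOn_iff.mp (hq w).2
    rw [hqwp] at hqmin
    have hA2 : ∀ y ∈ Metric.closedBall xbar rmax, 0 ≤ g0 y - g0 p + ⟪f' p, y - p⟫ := by
      intro y hyK
      refine aux_nonneg (c := 1 / (2 * γ) * ‖y - p‖ ^ 2) (by positivity) ?_
      intro t ht0 ht1
      set yt := p + t • (y - p) with hytdef
      have hytK : yt ∈ Metric.closedBall xbar rmax := by
        have hpt : (1 - t) • p + t • y = yt := by rw [hytdef]; module
        rw [← hpt]
        exact hK hpK hyK (by linarith) ht0.le (by ring)
      have hm := hqmin yt hytK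
      beta_reduce at hm
      have hcs : g0 yt ≤ (1 - t) * g0 p + t * g0 y := by
        have hpt : (1 - t) • p + t • y = yt := by rw [hytdef]; module
        have h := hpenconv.2 hpK hyK (by linarith : (0:ℝ) ≤ 1 - t) ht0.le (by ring)
        rw [hpt] at h
        simpa using h
      have hn : ‖yt - w‖ ^ 2
          = t ^ 2 * ‖y - p‖ ^ 2 + 2 * (t * γ) * ⟪f' p, y - p⟫ + ‖γ • f' p‖ ^ 2 := by
        have hrw : yt - w = t • (y - p) + (p - w) := by rw [hytdef]; abel
        rw [hrw, hw, norm_add_sq_real, real_inner_smul_left, real_inner_smul_right,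
          real_inner_comm (y - p) (f' p), norm_smul, Real.norm_of_nonneg ht0.le, mul_pow]
        ring
      rw [hw, hn] at hm
      have hcanc : 1 / (2 * γ) * (t ^ 2 * ‖y - p‖ ^ 2 + 2 * (t * γ) * ⟪f' p, y - p⟫
            + ‖γ • f' p‖ ^ 2)
          = t ^ 2 * (1 / (2 * γ) * ‖y - p‖ ^ 2) + t * ⟪f' p, y - p⟫
            + 1 / (2 * γ) * ‖γ • f' p‖ ^ 2 := by
        field_simp
      rw [hcanc] at hm
      have hcomb : 0 ≤ t * ((g0 y - g0 p + ⟪f' p, y - p⟫)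
          + t * (1 / (2 * γ) * ‖y - p‖ ^ 2)) := by
        simp only [hg0def] at hm hcs ⊢
        nlinarith [hm, hcs]
      exact aux_div ht0 hcomb
    have hpmin : IsMinOn (fun y => f y + (Metric.infDist y X) ^ 2 / (2 * μ) + β / 2 * ‖y‖ ^ 2)
        (Metric.closedBall xbar rmax) p := by
      rw [isMinOn_iff]
      intro y hyK
      beta_reduce
      have h1 := hA2 y hyK
      have h2 := hgi p y
      simp only [hg0def] at h1
      linarith
    have hpx := hxμuniq p hpK hpmin
    rw [hz, hpx]
  refine ⟨?_, hpz, ?_, ?_⟩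
  · intro z hz
    constructor
    · exact hconv4 z hz
    · intro h; rw [h]; exact hfwd
  · intro z1 hz1 z2 hz2
    have e1 := hconv4 z1 hz1.2 hz1.1
    have e2 := hconv4 z2 hz2.2 hz2.1
    rw [e1, e2]
  · intro hball
    have hset : {z : E | q ((2 : ℝ) • proxf z - z) + z - proxf z = z} ∩ Metric.ball xbar rmax
        = {xμ + γ • f' xμ} := by
      ext z
      simp only [Set.mem_inter_iff, Set.mem_setOf_eq, Set.mem_singleton_iff]
      constructor
      · rintro ⟨h1, h2⟩; exact hconv4 z h2 h1
      · rintro rfl; exact ⟨hfwd, hball⟩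
    refine ⟨hset, ?_⟩
    rw [hset, Set.image_singleton, hpz]
end

section
/- Let x̄ ∈ E, r_max > 0, ψ ∈ (0, r_max), κ' ∈ (0, 1), ℓ > 0 and μ_max > 0, and let (T_μ)_{μ ∈ (0, μ_max]} be a family of maps E → E such that: (a) ‖T_μ(z₁) − T_μ(z₂)‖ ≤ κ'·‖z₁ − z₂‖ for all μ ∈ (0, μ_max] and all z₁, z₂ ∈ B(x̄, r_max); (b) ‖T_{μ₁}(x) − T_{μ₂}(x)‖ ≤ ℓ·|μ₁ − μ₂| for all μ₁, μ₂ ∈ (0, μ_max] and all x ∈ B(x̄, r_max); and (c) for every μ ∈ (0, μ_max], T_μ has a fixed point z_μ ∈ B(x̄, r_max) satisfying r_max − ‖z_μ − x̄‖ > ψ. Let ε ∈ [0, (1 − κ')·ψ), let μ₁ ∈ (0, μ_max], let ρ ∈ (0, 1) satisfy ℓ·(1 − ρ)·μ₁ ≤ (1 − κ')·ψ − ε, and set μ_m := ρ^{m−1}·μ₁ for m ≥ 1. Then for every m ≥ 2: if z̃ ∈ B(x̄, r_max) satisfies ‖z̃ − T_{μ_{m−1}}(z̃)‖ ≤ ε,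 then the iterates z⁰ := z̃, z^{n+1} := T_{μ_m}(z^n) all lie in B(x̄, r_max), satisfy ‖z^n − z_{μ_m}‖ ≤ (κ')^n·(ε + ℓ·(μ_{m−1} − μ_m))/(1 − κ') for every n ≥ 0, and hence converge linearly to z_{μ_m}, which is the unique fixed point of T_{μ_m} in B(x̄, r_max). -/
/-- Main convergence result for NExOS. Given the uniform local
contraction property (a), Lipschitz continuity in `μ` (b), and fixed points
well inside the ball (c), each inner algorithm initialized at an
`ε`-approximate fixed point for the previous penalty parameter remains in the
ball and converges linearly to the unique fixed point of `T_{μ_m}`. -/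
theorem nexos_main_convergence
    {E : Type*} [NormedAddCommGroup E] [InnerProductSpace ℝ E] [FiniteDimensional ℝ E]
    (xbar : E) (rmax ψ κ' ℓ μmax : ℝ)
    (hrmax : 0 < rmax) (hψ0 : 0 < ψ) (hψr : ψ < rmax)
    (hκ0 : 0 < κ') (hκ1 : κ' < 1) (hℓ : 0 < ℓ) (hμmax : 0 < μmax)
    (T : ℝ → E → E)
    -- (a) uniform contraction on the ball
    (ha : ∀ μ ∈ Set.Ioc (0 : ℝ) μmax, ∀ z₁ ∈ Metric.ball xbar rmax,
      ∀ z₂ ∈ Metric.ball xbar rmax, ‖T μ z₁ - T μ z₂‖ ≤ κ' * ‖z₁ - z₂‖)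
    -- (b) Lipschitz continuity in `μ`
    (hb : ∀ μ₁ ∈ Set.Ioc (0 : ℝ) μmax, ∀ μ₂ ∈ Set.Ioc (0 : ℝ) μmax,
      ∀ x ∈ Metric.ball xbar rmax, ‖T μ₁ x - T μ₂ x‖ ≤ ℓ * |μ₁ - μ₂|)
    -- (c) fixed points well inside the ball
    (zfix : ℝ → E)
    (hc : ∀ μ ∈ Set.Ioc (0 : ℝ) μmax, zfix μ ∈ Metric.ball xbar rmax ∧
      T μ (zfix μ) = zfix μ ∧ ψ < rmax - ‖zfix μ - xbar‖)
    (ε : ℝ) (hε0 : 0 ≤ ε) (hε : ε < (1 - κ') * ψ)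
    (μ₁ : ℝ) (hμ₁ : μ₁ ∈ Set.Ioc (0 : ℝ) μmax)
    (ρ : ℝ) (hρ0 : 0 < ρ) (hρ1 : ρ < 1)
    (hρ : ℓ * (1 - ρ) * μ₁ ≤ (1 - κ') * ψ - ε) :
    ∀ m : ℕ, 2 ≤ m →
      ∀ ztilde ∈ Metric.ball xbar rmax,
        ‖ztilde - T (ρ ^ (m - 2) * μ₁) ztilde‖ ≤ ε →
        ∀ z : ℕ → E, z 0 = ztilde → (∀ n, z (n + 1) = T (ρ ^ (m - 1) * μ₁) (z n)) →
          (∀ n, z n ∈ Metric.ball xbar rmax) ∧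
          (∀ n, ‖z n - zfix (ρ ^ (m - 1) * μ₁)‖ ≤
            κ' ^ n * (ε + ℓ * (ρ ^ (m - 2) * μ₁ - ρ ^ (m - 1) * μ₁)) / (1 - κ')) ∧
          Filter.Tendsto z Filter.atTop (nhds (zfix (ρ ^ (m - 1) * μ₁))) ∧
          (∀ w ∈ Metric.ball xbar rmax,
            T (ρ ^ (m - 1) * μ₁) w = w → w = zfix (ρ ^ (m - 1) * μ₁)) := by

  intro m hm ztilde hzt hzeps z hz0 hzrec
  have hκ' : (0:ℝ) < 1 - κ' := by linarith
  set μp := ρ ^ (m - 2) * μ₁ with hμpdef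
  set μc := ρ ^ (m - 1) * μ₁ with hμcdef
  have hρm2 : ρ ^ (m - 2) ≤ 1 := pow_le_one₀ hρ0.le hρ1.le
  have hρm1 : ρ ^ (m - 1) ≤ 1 := pow_le_one₀ hρ0.le hρ1.le
  have hμpmem : μp ∈ Set.Ioc (0:ℝ) μmax := by
    constructor
    · exact mul_pos (pow_pos hρ0 _) hμ₁.1
    · have : μp ≤ μ₁ := by nlinarith [hμ₁.1]
      linarith [hμ₁.2]
  have hμcmem : μc ∈ Set.Ioc (0:ℝ) μmax := by
    constructor
    · exact mul_pos (pow_pos hρ0 _) hμ₁.1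
    · have : μc ≤ μ₁ := by nlinarith [hμ₁.1]
      linarith [hμ₁.2]
  obtain ⟨hzball, hzfixeq, hzψ⟩ := hc μc hμcmem
  have hΔeq : μp - μc = ρ ^ (m - 2) * (1 - ρ) * μ₁ := by
    have hmm : m - 1 = (m - 2) + 1 := by omega
    rw [hμpdef, hμcdef, hmm, pow_succ]; ring
  have h1ρ : (0:ℝ) ≤ 1 - ρ := by linarith
  have hΔ0 : 0 ≤ μp - μc := by
    rw [hΔeq]
    have := hμ₁.1.le
    positivity
  have hΔle : ℓ * (μp - μc) ≤ (1 - κ') * ψ - ε := by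
    rw [hΔeq]
    nlinarith [hμ₁.1, mul_nonneg (mul_nonneg hℓ.le h1ρ) hμ₁.1.le]
  set C : ℝ := (ε + ℓ * (μp - μc)) / (1 - κ') with hCdef
  have hC0 : 0 ≤ C := by
    apply div_nonneg _ hκ'.le
    nlinarith
  have hCψ : C ≤ ψ := by
    rw [hCdef, div_le_iff₀ hκ']
    nlinarith
  -- base bound
  have h0 : ‖ztilde - zfix μc‖ ≤ C := by
    have key : ‖ztilde - zfix μc‖ ≤ ε + ℓ * (μp - μc) + κ' * ‖ztilde - zfix μc‖ := by
      have t4 : dist ztilde (zfix μc) ≤ dist ztilde (T μp ztilde)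
          + dist (T μp ztilde) (T μc ztilde) + dist (T μc ztilde) (zfix μc) :=
        dist_triangle4 _ _ _ _
      rw [dist_eq_norm, dist_eq_norm, dist_eq_norm, dist_eq_norm] at t4
      have e1 : ‖ztilde - T μp ztilde‖ ≤ ε := hzeps
      have e2 : ‖T μp ztilde - T μc ztilde‖ ≤ ℓ * |μp - μc| :=
        hb μp hμpmem μc hμcmem ztilde hzt
      rw [abs_of_nonneg hΔ0] at e2
      have e3 : ‖T μc ztilde - zfix μc‖ ≤ κ' * ‖ztilde - zfix μc‖ := by
        nth_rewrite 1 [← hzfixeq]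
        exact ha μc hμcmem ztilde hzt (zfix μc) hzball
      linarith
    rw [hCdef, le_div_iff₀ hκ']
    nlinarith
  -- main induction
  have main : ∀ n, ‖z n - zfix μc‖ ≤ κ' ^ n * C ∧ z n ∈ Metric.ball xbar rmax := by
    intro n
    induction n with
    | zero =>
      refine ⟨by simpa [hz0] using h0, ?_⟩
      rw [hz0]; exact hzt
    | succ n ih =>
      have hbnd : ‖z (n + 1) - zfix μc‖ ≤ κ' * ‖z n - zfix μc‖ := by
        rw [hzrec n]
        nth_rewrite 1 [← hzfixeq]
        exact ha μc hμcmem (z n) ih.2 (zfix μc) hzball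
      have hbnd2 : ‖z (n + 1) - zfix μc‖ ≤ κ' ^ (n + 1) * C := by
        calc ‖z (n + 1) - zfix μc‖ ≤ κ' * ‖z n - zfix μc‖ := hbnd
          _ ≤ κ' * (κ' ^ n * C) := mul_le_mul_of_nonneg_left ih.1 hκ0.le
          _ = κ' ^ (n + 1) * C := by ring
      refine ⟨hbnd2, ?_⟩
      rw [Metric.mem_ball, dist_eq_norm]
      have tri : ‖z (n + 1) - xbar‖ ≤ ‖z (n + 1) - zfix μc‖ + ‖zfix μc - xbar‖ :=
        norm_sub_le_norm_sub_add_norm_sub _ _ _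
      have hκpow : κ' ^ (n + 1) ≤ 1 := pow_le_one₀ hκ0.le hκ1.le
      have : κ' ^ (n + 1) * C ≤ ψ :=
        le_trans (mul_le_of_le_one_left hC0 hκpow) hCψ
      linarith
  have hball : ∀ n, z n ∈ Metric.ball xbar rmax := fun n => (main n).2
  have hrate : ∀ n, ‖z n - zfix μc‖ ≤ κ' ^ n * (ε + ℓ * (μp - μc)) / (1 - κ') := by
    intro n
    have := (main n).1
    rw [hCdef] at this
    calc ‖z n - zfix μc‖ ≤ κ' ^ n * ((ε + ℓ * (μp - μc)) / (1 - κ')) := this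
      _ = κ' ^ n * (ε + ℓ * (μp - μc)) / (1 - κ') := by ring
  refine ⟨hball, hrate, ?_, ?_⟩
  · rw [tendsto_iff_norm_sub_tendsto_zero]
    have hlim : Filter.Tendsto (fun n => κ' ^ n * C) Filter.atTop (nhds 0) := by
      have := (tendsto_pow_atTop_nhds_zero_of_lt_one hκ0.le hκ1).mul_const C
      simpa using this
    exact squeeze_zero (fun n => norm_nonneg _) (fun n => (main n).1) hlim
  · intro w hw hwfix
    have hcon : ‖T μc w - T μc (zfix μc)‖ ≤ κ' * ‖w - zfix μc‖ :=
      ha μc hμcmem w hw (zfix μc) hzball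
    rw [hwfix, hzfixeq] at hcon
    have h1 : (1 - κ') * ‖w - zfix μc‖ ≤ (1 - κ') * 0 := by rw [mul_zero]; linarith
    have : ‖w - zfix μc‖ ≤ 0 := le_of_mul_le_mul_left h1 hκ'
    have := le_antisymm this (norm_nonneg _)
    rw [norm_sub_eq_zero_iff] at this
    exact this
end

section
/- Let X ⊆ E be nonempty and compact, let μ, β, γ > 0, and set κ := 1/(βγ + 1) and θ := μ/(γκ + μ). Then for every x ∈ E, a point y ∈ E minimizes the function w ↦ ι̂_μ(w) + (1/(2γ))‖w − x‖² over E if and only if y = θ·κ·x + (1 − θ)·p for some p ∈ X with ‖κx − p‖ = infDist(κx, X); that is, the set of minimizers equals {θκx + (1 − θ)p : p ∈ X, ‖κx − p‖ = infDist(κx, X)}. -/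
open Metric

lemma nexos_key_identity {E : Type*} [NormedAddCommGroup E] [InnerProductSpace ℝ E]
    (μ β γ : ℝ) (hμ : 0 < μ) (hβ : 0 < β) (hγ : 0 < γ) (x w p : E) :
    ‖w - p‖ ^ 2 / (2 * μ) + β / 2 * ‖w‖ ^ 2 + 1 / (2 * γ) * ‖w - x‖ ^ 2
      = (γ + μ * β * γ + μ) / (2 * μ * γ)
          * ‖w - ((μ / (γ + μ * β * γ + μ)) • x + (γ / (γ + μ * β * γ + μ)) • p)‖ ^ 2
        + (β * γ + 1) / (2 * (γ + μ * β * γ + μ)) * ‖(1 / (β * γ + 1)) • x - p‖ ^ 2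
        + (1 / (2 * γ) - μ / (2 * γ * (γ + μ * β * γ + μ))
            - 1 / (2 * (γ + μ * β * γ + μ) * (β * γ + 1))) * ‖x‖ ^ 2 := by
  have hS : (0:ℝ) < γ + μ * β * γ + μ := by positivity
  have hbg : (0:ℝ) < β * γ + 1 := by positivity
  simp only [← real_inner_self_eq_norm_sq]
  simp only [inner_sub_left, inner_sub_right, inner_add_left, inner_add_right,
    real_inner_smul_left, real_inner_smul_right]
  rw [real_inner_comm p w, real_inner_comm x w, real_inner_comm p x]
  field_simp
  ring

set_option maxHeartbeats 1000000 in
/-- Computing the proximal operator of `ι̂_μ`. With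
`κ := 1/(βγ+1)` and `θ := μ/(γκ+μ)`, a point `y` minimizes
`w ↦ ι̂_μ(w) + (1/(2γ))‖w − x‖²` over `E` if and only if
`y = θκx + (1−θ)p` for some nearest point `p` of `κx` in `X`. -/
theorem nexos_prox_of_penalty
    {E : Type*} [NormedAddCommGroup E] [InnerProductSpace ℝ E] [FiniteDimensional ℝ E]
    (X : Set E) (hXne : X.Nonempty) (hXcp : IsCompact X)
    (μ β γ : ℝ) (hμ : 0 < μ) (hβ : 0 < β) (hγ : 0 < γ) :
    ∀ x y : E,
      IsMinOn (fun w => (Metric.infDist w X) ^ 2 / (2 * μ) + β / 2 * ‖w‖ ^ 2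
          + 1 / (2 * γ) * ‖w - x‖ ^ 2) Set.univ y ↔
      ∃ p ∈ X, ‖(1 / (β * γ + 1)) • x - p‖ = Metric.infDist ((1 / (β * γ + 1)) • x) X ∧
        y = ((μ / (γ * (1 / (β * γ + 1)) + μ)) * (1 / (β * γ + 1))) • x
          + (1 - μ / (γ * (1 / (β * γ + 1)) + μ)) • p := by
  intro x y
  have hS : (0:ℝ) < γ + μ * β * γ + μ := by positivity
  have hbg : (0:ℝ) < β * γ + 1 := by positivity
  have hden : (0:ℝ) < γ * (1 / (β * γ + 1)) + μ := by positivity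
  -- scalar simplifications
  have ha : (μ / (γ * (1 / (β * γ + 1)) + μ)) * (1 / (β * γ + 1))
      = μ / (γ + μ * β * γ + μ) := by
    field_simp
    ring
  have hb : 1 - μ / (γ * (1 / (β * γ + 1)) + μ) = γ / (γ + μ * β * γ + μ) := by
    have h : γ * (1 / (β * γ + 1)) + μ = (γ + μ * β * γ + μ) / (β * γ + 1) := by
      field_simp; ring
    rw [h, div_div_eq_mul_div, sub_eq_iff_eq_add, ← add_div, eq_comm,
      div_eq_one_iff_eq hS.ne']
    ring
  set κ : ℝ := 1 / (β * γ + 1) with hκdef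
  set F : E → ℝ := fun w => (Metric.infDist w X) ^ 2 / (2 * μ) + β / 2 * ‖w‖ ^ 2
      + 1 / (2 * γ) * ‖w - x‖ ^ 2 with hF
  set g : E → E → ℝ := fun w p => ‖w - p‖ ^ 2 / (2 * μ) + β / 2 * ‖w‖ ^ 2
      + 1 / (2 * γ) * ‖w - x‖ ^ 2 with hg
  set D : ℝ := (γ + μ * β * γ + μ) / (2 * μ * γ) with hD
  set c1 : ℝ := (β * γ + 1) / (2 * (γ + μ * β * γ + μ)) with hc1
  set C : ℝ := (1 / (2 * γ) - μ / (2 * γ * (γ + μ * β * γ + μ))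
      - 1 / (2 * (γ + μ * β * γ + μ) * (β * γ + 1))) with hC
  set yy : E → E := fun p => (μ / (γ + μ * β * γ + μ)) • x + (γ / (γ + μ * β * γ + μ)) • p
    with hyy
  have hDpos : 0 < D := by rw [hD]; positivity
  have hc1pos : 0 < c1 := by rw [hc1]; positivity
  have key : ∀ w p : E, g w p = D * ‖w - yy p‖ ^ 2 + c1 * ‖κ • x - p‖ ^ 2 + C * ‖x‖ ^ 2 := by
    intro w p
    have := nexos_key_identity μ β γ hμ hβ hγ x w p
    simpa [hg, hyy, hκdef, hD, hc1, hC] using this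
  -- F w ≤ g w q for q ∈ X
  have hFle : ∀ w : E, ∀ q ∈ X, F w ≤ g w q := by
    intro w q hq
    have h1 : Metric.infDist w X ≤ ‖w - q‖ := by
      simpa [dist_eq_norm] using Metric.infDist_le_dist_of_mem hq
    have h2 : (Metric.infDist w X) ^ 2 ≤ ‖w - q‖ ^ 2 :=
      pow_le_pow_left₀ Metric.infDist_nonneg h1 2
    have h3 : (Metric.infDist w X) ^ 2 / (2 * μ) ≤ ‖w - q‖ ^ 2 / (2 * μ) :=
      div_le_div_of_nonneg_right h2 (by positivity)
    simp only [hF, hg]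
    linarith
  -- F w = g w q for some nearest q
  have hFeq : ∀ w : E, ∃ q ∈ X, F w = g w q := by
    intro w
    obtain ⟨q, hq, hdq⟩ := hXcp.exists_infDist_eq_dist hXne w
    exact ⟨q, hq, by simp only [hF, hg, hdq, dist_eq_norm]⟩
  obtain ⟨p', hp', hdp'⟩ := hXcp.exists_infDist_eq_dist hXne (κ • x)
  have hdp' : Metric.infDist (κ • x) X = ‖κ • x - p'‖ := by
    rw [hdp', dist_eq_norm]
  have hnp : ∀ q ∈ X, ‖κ • x - p'‖ ≤ ‖κ • x - q‖ := by
    intro q hq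
    rw [← hdp']
    simpa [dist_eq_norm] using Metric.infDist_le_dist_of_mem hq
  rw [ha, hb]
  constructor
  · intro hmin
    obtain ⟨p, hp, hFy⟩ := hFeq y
    have h1 : F y ≤ F (yy p') := hmin (Set.mem_univ _)
    have h2 : F (yy p') ≤ g (yy p') p' := hFle _ p' hp'
    have h3 : g (yy p') p' = c1 * ‖κ • x - p'‖ ^ 2 + C * ‖x‖ ^ 2 := by
      rw [key]; simp
    have h4 : g y p = D * ‖y - yy p‖ ^ 2 + c1 * ‖κ • x - p‖ ^ 2 + C * ‖x‖ ^ 2 := key y p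
    have h5 : ‖κ • x - p'‖ ^ 2 ≤ ‖κ • x - p‖ ^ 2 :=
      pow_le_pow_left₀ (norm_nonneg _) (hnp p hp) 2
    have h6 : D * ‖y - yy p‖ ^ 2 + c1 * ‖κ • x - p‖ ^ 2 ≤ c1 * ‖κ • x - p'‖ ^ 2 := by
      have := h1.trans (h2.trans_eq h3)
      rw [hFy, h4] at this
      linarith
    have hz : ‖y - yy p‖ ^ 2 = 0 := by
      nlinarith [sq_nonneg ‖y - yy p‖]
    have hyp : y = yy p := by
      have : ‖y - yy p‖ = 0 := by nlinarith [norm_nonneg (y - yy p)]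
      rwa [norm_sub_eq_zero_iff] at this
    have hnear : ‖κ • x - p‖ = Metric.infDist (κ • x) X := by
      have hle : ‖κ • x - p‖ ^ 2 ≤ ‖κ • x - p'‖ ^ 2 := by nlinarith
      have : ‖κ • x - p‖ ≤ ‖κ • x - p'‖ := by
        nlinarith [norm_nonneg (κ • x - p), norm_nonneg (κ • x - p')]
      rw [hdp']
      exact le_antisymm this (hnp p hp)
    exact ⟨p, hp, hnear, by rw [hyp, hyy]⟩
  · rintro ⟨p, hp, hnear, rfl⟩
    intro w _
    have hEq : (μ / (γ + μ * β * γ + μ)) • x + (γ / (γ + μ * β * γ + μ)) • p = yy p := rfl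
    rw [hEq]
    obtain ⟨q, hq, hFw⟩ := hFeq w
    have h1 : F (yy p) ≤ g (yy p) p := hFle _ p hp
    have h2 : g (yy p) p = c1 * ‖κ • x - p‖ ^ 2 + C * ‖x‖ ^ 2 := by rw [key]; simp
    have h3 : g w q = D * ‖w - yy q‖ ^ 2 + c1 * ‖κ • x - q‖ ^ 2 + C * ‖x‖ ^ 2 := key w q
    have h4 : ‖κ • x - p‖ ≤ ‖κ • x - q‖ := by
      rw [hnear, hdp']; exact hnp q hq
    have h5 : ‖κ • x - p‖ ^ 2 ≤ ‖κ • x - q‖ ^ 2 :=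
      pow_le_pow_left₀ (norm_nonneg _) h4 2
    have h6 : 0 ≤ D * ‖w - yy q‖ ^ 2 := by positivity
    show F (yy p) ≤ F w
    rw [hFw, h3]
    nlinarith
end

section
/- Let μ, β > 0, let x̄ ∈ E, r > 0, L̃ ≥ 0, and let Π : E → E be such that for every y ∈ B(x̄, r): Π(y) ∈ X, ‖y − Π(y)‖ = infDist(y, X), the map Π is L̃-Lipschitz on B(x̄, r), and the function w ↦ d(w)² is differentiable at y with gradient 2·(y − Π(y)). Let f be L-smooth. Then for every y ∈ B(x̄, r), the exterior-point minimization function f + ι̂_μ is differentiable at y with gradient ∇f(y) + (β + 1/μ)·y − (1/μ)·Π(y), and this gradient map is Lipschitz on B(x̄, r) with Lipschitz constant L + β + (1 + L̃)/μ. -/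
/-- Gradient formula and Lipschitz constant for the
exterior-point minimization function `f + ι̂_μ` on a ball where the projection
`proj` onto `X` is a well-behaved nearest-point map. -/
theorem nexos_gradient_formula_and_smoothness
    {E : Type*} [NormedAddCommGroup E] [InnerProductSpace ℝ E] [FiniteDimensional ℝ E]
    (X : Set E) (hXne : X.Nonempty) (hXcl : IsClosed X)
    (f : E → ℝ) (f' : E → E) (L : ℝ)
    (hgrad : ∀ x, HasGradientAt f (f' x) x)
    (hlip : ∀ x y, ‖f' x - f' y‖ ≤ L * ‖x - y‖)
    (μ β : ℝ) (hμ : 0 < μ) (hβ : 0 < β)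
    (xbar : E) (r : ℝ) (hr : 0 < r)
    (Ltilde : ℝ) (hLtilde : 0 ≤ Ltilde)
    (proj : E → E)
    (hproj : ∀ y ∈ Metric.ball xbar r,
      proj y ∈ X ∧ ‖y - proj y‖ = Metric.infDist y X)
    (hprojlip : ∀ y₁ ∈ Metric.ball xbar r, ∀ y₂ ∈ Metric.ball xbar r,
      ‖proj y₁ - proj y₂‖ ≤ Ltilde * ‖y₁ - y₂‖)
    (hd2 : ∀ y ∈ Metric.ball xbar r,
      HasGradientAt (fun w => (Metric.infDist w X) ^ 2) ((2 : ℝ) • (y - proj y)) y) :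
    (∀ y ∈ Metric.ball xbar r,
      HasGradientAt (fun w => f w + (Metric.infDist w X) ^ 2 / (2 * μ) + β / 2 * ‖w‖ ^ 2)
        (f' y + (β + 1 / μ) • y - (1 / μ) • proj y) y) ∧
    (∀ y₁ ∈ Metric.ball xbar r, ∀ y₂ ∈ Metric.ball xbar r,
      ‖(f' y₁ + (β + 1 / μ) • y₁ - (1 / μ) • proj y₁)
          - (f' y₂ + (β + 1 / μ) • y₂ - (1 / μ) • proj y₂)‖ ≤
        (L + β + (1 + Ltilde) / μ) * ‖y₁ - y₂‖) := by
  constructor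
  · intro y hy
    have h1 := (hgrad y).hasFDerivAt
    have h2 := (hd2 y hy).hasFDerivAt
    have h2' : HasFDerivAt (fun w => (Metric.infDist w X) ^ 2 / (2 * μ))
        ((2 * μ)⁻¹ • (InnerProductSpace.toDual ℝ E ((2 : ℝ) • (y - proj y)))) y := by
      simpa [div_eq_inv_mul] using h2.const_mul (2 * μ)⁻¹
    have h3 := (hasStrictFDerivAt_norm_sq y).hasFDerivAt.const_mul (β / 2)
    have h := (h1.add h2').add h3
    rw [hasGradientAt_iff_hasFDerivAt]
    refine h.congr_fderiv (Eq.symm ?_)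
    ext v
    have hμ' : μ ≠ 0 := ne_of_gt hμ
    simp only [InnerProductSpace.toDual_apply_apply, ContinuousLinearMap.add_apply,
      ContinuousLinearMap.smul_apply, innerSL_apply_apply]
    rw [sub_eq_add_neg, ← neg_smul]
    simp only [inner_add_left, inner_smul_left, inner_sub_left, RCLike.conj_to_real,
      conj_trivial]
    field_simp
    linear_combination (inner ℝ (proj y) v - inner ℝ y v) * mul_inv_cancel₀ hμ'
  · intro y₁ hy₁ y₂ hy₂
    have heq : (f' y₁ + (β + 1 / μ) • y₁ - (1 / μ) • proj y₁)
          - (f' y₂ + (β + 1 / μ) • y₂ - (1 / μ) • proj y₂)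
        = (f' y₁ - f' y₂) + (β + 1 / μ) • (y₁ - y₂) - (1 / μ) • (proj y₁ - proj y₂) := by
      simp only [smul_sub]; abel
    have h1 := hlip y₁ y₂
    have h2 := hprojlip y₁ hy₁ y₂ hy₂
    have hn : 0 ≤ ‖y₁ - y₂‖ := norm_nonneg _
    calc ‖(f' y₁ + (β + 1 / μ) • y₁ - (1 / μ) • proj y₁)
          - (f' y₂ + (β + 1 / μ) • y₂ - (1 / μ) • proj y₂)‖
        = ‖(f' y₁ - f' y₂) + (β + 1 / μ) • (y₁ - y₂) - (1 / μ) • (proj y₁ - proj y₂)‖ := by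
          rw [heq]
      _ ≤ ‖(f' y₁ - f' y₂) + (β + 1 / μ) • (y₁ - y₂)‖ + ‖(1 / μ) • (proj y₁ - proj y₂)‖ :=
          norm_sub_le _ _
      _ ≤ ‖f' y₁ - f' y₂‖ + ‖(β + 1 / μ) • (y₁ - y₂)‖ + ‖(1 / μ) • (proj y₁ - proj y₂)‖ := by
          gcongr; exact norm_add_le _ _
      _ ≤ L * ‖y₁ - y₂‖ + |β + 1 / μ| * ‖y₁ - y₂‖ + |1 / μ| * ‖proj y₁ - proj y₂‖ := by
          rw [norm_smul, norm_smul]; gcongr <;> simp [Real.norm_eq_abs]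
      _ ≤ L * ‖y₁ - y₂‖ + (β + 1 / μ) * ‖y₁ - y₂‖ + (1 / μ) * (Ltilde * ‖y₁ - y₂‖) := by
          have hβμ : 0 ≤ β + 1 / μ := by positivity
          have hμ0 : 0 ≤ 1 / μ := by positivity
          rw [abs_of_nonneg hβμ, abs_of_nonneg hμ0]
          gcongr
      _ = (L + β + (1 + Ltilde) / μ) * ‖y₁ - y₂‖ := by field_simp; ring
end

section
/- Let μ, β > 0, let x̄ ∈ E, r > 0, and let Π : E → E be such that for every y ∈ B(x̄, r): Π(y) ∈ X, ‖y − Π(y)‖ = infDist(y, X), and the function w ↦ d(w)² is differentiable at y with gradient 2·(y − Π(y)). Let f be differentiable. If x_μ ∈ B(x̄, r) is a local minimizer of the exterior-point minimization function f + ι̂_μ, then ∇f(x_μ) + β·x_μ + (1/μ)·(x_μ − Π(x_μ)) = 0; equivalently, x_μ = (1/(βμ + 1))·(Π(x_μ) − μ·∇f(x_μ)). -/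
/-- First-order optimality condition for a local minimizer `xμ`
of the exterior-point minimization function `f + ι̂_μ`:
`∇f(xμ) + β·xμ + (1/μ)(xμ − Π(xμ)) = 0`, equivalently
`xμ = (1/(βμ+1))(Π(xμ) − μ∇f(xμ))`. -/
theorem nexos_first_order_optimality
    {E : Type*} [NormedAddCommGroup E] [InnerProductSpace ℝ E] [FiniteDimensional ℝ E]
    (X : Set E) (hXne : X.Nonempty) (hXcl : IsClosed X)
    (f : E → ℝ) (f' : E → E)
    (hgrad : ∀ x, HasGradientAt f (f' x) x)
    (μ β : ℝ) (hμ : 0 < μ) (hβ : 0 < β)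
    (xbar : E) (r : ℝ) (hr : 0 < r)
    (proj : E → E)
    (hproj : ∀ y ∈ Metric.ball xbar r,
      proj y ∈ X ∧ ‖y - proj y‖ = Metric.infDist y X)
    (hd2 : ∀ y ∈ Metric.ball xbar r,
      HasGradientAt (fun w => (Metric.infDist w X) ^ 2) ((2 : ℝ) • (y - proj y)) y)
    (xμ : E) (hxμ : xμ ∈ Metric.ball xbar r)
    (hloc : IsLocalMin
      (fun w => f w + (Metric.infDist w X) ^ 2 / (2 * μ) + β / 2 * ‖w‖ ^ 2) xμ) :
    f' xμ + β • xμ + (1 / μ) • (xμ - proj xμ) = 0 ∧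
    xμ = (1 / (β * μ + 1)) • (proj xμ - μ • f' xμ) := by
  -- gradient of the squared norm
  have hnorm : HasFDerivAt (fun w : E => ‖w‖ ^ 2)
      (InnerProductSpace.toDual ℝ E ((2 : ℝ) • xμ)) xμ := by
    have h := (hasStrictFDerivAt_norm_sq xμ).hasFDerivAt
    convert h using 1
    ext v
    simp [real_inner_smul_left]
  have hf : HasFDerivAt f (InnerProductSpace.toDual ℝ E (f' xμ)) xμ :=
    (hasGradientAt_iff_hasFDerivAt.mp (hgrad xμ))
  have hd : HasFDerivAt (fun w => (Metric.infDist w X) ^ 2)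
      (InnerProductSpace.toDual ℝ E ((2 : ℝ) • (xμ - proj xμ))) xμ :=
    hasGradientAt_iff_hasFDerivAt.mp (hd2 xμ hxμ)
  have hF : HasFDerivAt
      (fun w => f w + (Metric.infDist w X) ^ 2 / (2 * μ) + β / 2 * ‖w‖ ^ 2)
      (InnerProductSpace.toDual ℝ E (f' xμ)
        + (2 * μ)⁻¹ • InnerProductSpace.toDual ℝ E ((2 : ℝ) • (xμ - proj xμ))
        + (β / 2) • InnerProductSpace.toDual ℝ E ((2 : ℝ) • xμ)) xμ := by
    have h1 := hd.const_mul (2 * μ)⁻¹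
    have h2 := hnorm.const_mul (β / 2)
    have := (hf.add h1).add h2
    simp [div_eq_inv_mul, smul_smul] at this ⊢
    exact this
  have hzero := hloc.hasFDerivAt_eq_zero hF
  have heq : InnerProductSpace.toDual ℝ E
      (f' xμ + β • xμ + (1 / μ) • (xμ - proj xμ)) = 0 := by
    rw [← hzero]
    simp only [map_add, map_smul, smul_smul]
    have e1 : (2 * μ)⁻¹ * 2 = 1 / μ := by field_simp
    have e2 : β / 2 * 2 = β := by ring
    rw [e1, e2]
    abel
  have eq1 : f' xμ + β • xμ + (1 / μ) • (xμ - proj xμ) = 0 :=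
    (InnerProductSpace.toDual ℝ E).map_eq_zero_iff.mp heq
  refine ⟨eq1, ?_⟩
  have key : (β * μ + 1) • xμ = proj xμ - μ • f' xμ := by
    have h := congrArg (fun v => μ • v) eq1
    simp only [smul_add, smul_smul, smul_zero, smul_sub] at h
    rw [mul_one_div, div_self hμ.ne', one_smul] at h
    have hcomm : β * μ = μ * β := mul_comm _ _
    linear_combination (norm := module) h
  have hpos : β * μ + 1 ≠ 0 := by positivity
  rw [← key, smul_smul, one_div, inv_mul_cancel₀ hpos, one_smul]
end

section
/- Fix integers d ≥ 1 and 1 ≤ k ≤ d, and let N := {x ∈ ℝ^d : x has at most k nonzero coordinates}, viewed as a subset of d-dimensional Euclidean space. If x ∈ N has exactly k nonzero coordinates, then N is prox-regular at x: there exists δ > 0 such that every y ∈ ℝ^d with ‖y − x‖ < δ has a unique nearest point in N, i.e., a unique p ∈ N with ‖y − p‖ = infDist(y, N). -/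
private lemma euclid_norm_sq {d : ℕ} (v : EuclideanSpace ℝ (Fin d)) :
    ‖v‖ ^ 2 = ∑ i, (v i) ^ 2 := by
  rw [PiLp.norm_sq_eq_of_L2]
  simp [Real.norm_eq_abs, sq_abs]

private lemma euclid_coord_le {d : ℕ} (v : EuclideanSpace ℝ (Fin d)) (i : Fin d) :
    |v i| ≤ ‖v‖ := by
  have h1 : (v i) ^ 2 ≤ ‖v‖ ^ 2 := by
    rw [euclid_norm_sq]
    exact Finset.single_le_sum (f := fun j => (v j) ^ 2) (fun j _ => sq_nonneg _)
      (Finset.mem_univ i)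
  calc |v i| = Real.sqrt ((v i) ^ 2) := (Real.sqrt_sq_eq_abs _).symm
    _ ≤ Real.sqrt (‖v‖ ^ 2) := Real.sqrt_le_sqrt h1
    _ = ‖v‖ := Real.sqrt_sq (norm_nonneg _)

/-- The sparsity constraint set
`N = {x ∈ ℝ^d : x has at most k nonzero coordinates}` is prox-regular at any
point with exactly `k` nonzero coordinates. -/
theorem sparse_set_prox_regular
    (d k : ℕ) (hd : 1 ≤ d) (hk1 : 1 ≤ k) (hkd : k ≤ d)
    (x : EuclideanSpace ℝ (Fin d))
    (hx : {i : Fin d | x i ≠ 0}.ncard = k) :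
    ∃ δ > (0 : ℝ), ∀ y : EuclideanSpace ℝ (Fin d), ‖y - x‖ < δ →
      ∃! p : EuclideanSpace ℝ (Fin d),
        p ∈ {v : EuclideanSpace ℝ (Fin d) | {i : Fin d | v i ≠ 0}.ncard ≤ k} ∧
        ‖y - p‖ = Metric.infDist y
          {v : EuclideanSpace ℝ (Fin d) | {i : Fin d | v i ≠ 0}.ncard ≤ k} := by
  classical
  set Nset := {v : EuclideanSpace ℝ (Fin d) | {i : Fin d | v i ≠ 0}.ncard ≤ k} with hNset
  set S : Finset (Fin d) := Finset.univ.filter (fun i => x i ≠ 0) with hSdef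
  have hSset : {i : Fin d | x i ≠ 0} = ↑S := by ext i; simp [hSdef]
  have hScard : S.card = k := by rw [← hx, hSset, Set.ncard_coe_finset]
  have hSne : S.Nonempty := Finset.card_pos.mp (by omega)
  set m : ℝ := S.inf' hSne (fun i => |x i|) with hmdef
  have hm : 0 < m := by
    rw [hmdef, Finset.lt_inf'_iff]
    intro i hi
    exact abs_pos.mpr (by simpa [hSdef] using hi)
  refine ⟨m / 2, by positivity, fun y hy => ?_⟩
  have hcoord : ∀ i : Fin d, |y i - x i| < m / 2 := by
    intro i
    have h1 : |(y - x) i| ≤ ‖y - x‖ := euclid_coord_le (y - x) i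
    rw [PiLp.sub_apply] at h1
    exact h1.trans_lt hy
  have hbig : ∀ i ∈ S, m / 2 < |y i| := by
    intro i hi
    have h2 : m ≤ |x i| := Finset.inf'_le _ hi
    have h3 := abs_sub_abs_le_abs_sub (x i) (y i)
    have h4 : |x i - y i| = |y i - x i| := abs_sub_comm _ _
    have h5 := hcoord i
    linarith
  have hsmall : ∀ i ∉ S, |y i| < m / 2 := by
    intro i hi
    have hx0 : x i = 0 := by simpa [hSdef] using hi
    have := hcoord i
    rwa [hx0, sub_zero] at this
  set p : EuclideanSpace ℝ (Fin d) := WithLp.toLp 2 (fun i => if i ∈ S then y i else 0) with hpdef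
  have hpmem : ∀ i, p i = if i ∈ S then y i else 0 := fun i => rfl
  have hpN : p ∈ Nset := by
    have hsub : {i : Fin d | p i ≠ 0} ⊆ ↑S := by
      intro i hi
      by_contra h
      apply hi
      rw [hpmem, if_neg (fun hS => h (Finset.mem_coe.mpr hS))]
    have := Set.ncard_le_ncard hsub S.finite_toSet
    rw [Set.ncard_coe_finset, hScard] at this
    exact this
  have hnormsq : ∀ q : EuclideanSpace ℝ (Fin d), ‖y - q‖ ^ 2 = ∑ i, (y i - q i) ^ 2 := by
    intro q
    rw [euclid_norm_sq]
    exact Finset.sum_congr rfl fun i _ => by rw [PiLp.sub_apply]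
  have hyp : ‖y - p‖ ^ 2 = ∑ i ∈ Finset.univ \ S, (y i) ^ 2 := by
    rw [hnormsq, ← Finset.sum_sdiff (Finset.subset_univ S)]
    have hS0 : ∑ i ∈ S, (y i - p i) ^ 2 = 0 :=
      Finset.sum_eq_zero fun i hi => by rw [hpmem, if_pos hi]; ring
    rw [hS0, add_zero]
    refine Finset.sum_congr rfl fun i hi => ?_
    rw [hpmem, if_neg (Finset.mem_sdiff.mp hi).2, sub_zero]
  -- key strict inequality
  have key : ∀ q ∈ Nset, q ≠ p → ‖y - p‖ ^ 2 < ‖y - q‖ ^ 2 := by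
    intro q hqN hqp
    set T : Finset (Fin d) := Finset.univ.filter (fun i => q i ≠ 0) with hTdef
    have hTcard : T.card ≤ k := by
      have hTset : {i : Fin d | q i ≠ 0} = ↑T := by ext i; simp [hTdef]
      have h := hqN
      rw [hNset, Set.mem_setOf_eq, hTset, Set.ncard_coe_finset] at h
      exact h
    have hqT : ∀ i ∉ T, q i = 0 := by
      intro i hi
      by_contra h
      exact hi (by simp [hTdef, h])
    by_cases hST : S ⊆ T
    · -- then T = S and q is supported on S
      have hTS : S = T := Finset.eq_of_subset_of_card_le hST (by omega)
      have hq0 : ∀ i ∉ S, q i = 0 := fun i hi => hqT i (hTS ▸ hi)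
      obtain ⟨i0, hi0⟩ : ∃ i, q i ≠ p i := by
        by_contra h
        push_neg at h
        exact hqp (PiLp.ext h)
      have hi0S : i0 ∈ S := by
        by_contra h
        exact hi0 (by rw [hq0 i0 h, hpmem, if_neg h])
      rw [hnormsq, hnormsq]
      refine Finset.sum_lt_sum (fun i _ => ?_) ⟨i0, Finset.mem_univ i0, ?_⟩
      · by_cases hiS : i ∈ S
        · rw [hpmem, if_pos hiS, sub_self]
          simpa using sq_nonneg (y i - q i)
        · rw [hpmem, if_neg hiS, hq0 i hiS]
      · rw [hpmem, if_pos hi0S, sub_self]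
        have : y i0 - q i0 ≠ 0 := by
          rw [hpmem, if_pos hi0S] at hi0
          intro h
          exact hi0 (by linarith [sub_eq_zero.mp h])
        have h2 : 0 < (y i0 - q i0) ^ 2 := by positivity
        simpa using h2
    · -- some support coordinate of x is dropped by q
      obtain ⟨i0, hi0S, hi0T⟩ : ∃ i ∈ S, i ∉ T := by
        rcases Finset.not_subset.mp hST with ⟨i, hiS, hiT⟩
        exact ⟨i, hiS, hiT⟩
      set A : Finset (Fin d) := S \ T with hA
      set B : Finset (Fin d) := T \ S with hB
      set C : Finset (Fin d) := Finset.univ \ (S ∪ T) with hC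
      have hAne : A.Nonempty := ⟨i0, Finset.mem_sdiff.mpr ⟨hi0S, hi0T⟩⟩
      have hBAcard : B.card ≤ A.card := by
        have h1 : B.card + (T ∩ S).card = T.card := by
          rw [hB]; exact Finset.card_sdiff_add_card_inter T S
        have h2 : A.card + (S ∩ T).card = S.card := by
          rw [hA]; exact Finset.card_sdiff_add_card_inter S T
        have h3 : (T ∩ S).card = (S ∩ T).card := by rw [Finset.inter_comm]
        omega
      -- decompositions
      have hdecS : Finset.univ \ S = B ∪ C := by
        ext i; simp [hB, hC]; tauto
      have hdecT : Finset.univ \ T = A ∪ C := by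
        ext i; simp [hA, hC]; tauto
      have hdisjBC : Disjoint B C := by
        rw [Finset.disjoint_left]
        intro i hiB hiC
        simp [hB] at hiB
        simp [hC] at hiC
        exact absurd hiB.1 (hiC.2 )
      have hdisjAC : Disjoint A C := by
        rw [Finset.disjoint_left]
        intro i hiA hiC
        simp [hA] at hiA
        simp [hC] at hiC
        exact absurd hiA.1 hiC.1
      have hsumB : ∑ i ∈ B, (y i) ^ 2 ≤ (B.card : ℝ) * (m / 2) ^ 2 := by
        have := Finset.sum_le_card_nsmul B (fun i => (y i) ^ 2) ((m / 2) ^ 2) ?_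
        · simpa [nsmul_eq_mul] using this
        · intro i hi
          have hiS : i ∉ S := (Finset.mem_sdiff.mp hi).2
          have := hsmall i hiS
          calc (y i) ^ 2 = |y i| ^ 2 := (sq_abs _).symm
            _ ≤ (m / 2) ^ 2 := by
                apply pow_le_pow_left₀ (abs_nonneg _) this.le
      have hsumA : (A.card : ℝ) * (m / 2) ^ 2 < ∑ i ∈ A, (y i) ^ 2 := by
        have h := Finset.sum_lt_sum_of_nonempty hAne
          (f := fun _ => (m / 2) ^ 2) (g := fun i => (y i) ^ 2) ?_
        · simpa [Finset.sum_const, nsmul_eq_mul] using h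
        · intro i hi
          have hiS : i ∈ S := (Finset.mem_sdiff.mp hi).1
          have h1 := hbig i hiS
          calc (m / 2) ^ 2 < |y i| ^ 2 := by
                apply pow_lt_pow_left₀ h1 (by positivity)
                norm_num
            _ = (y i) ^ 2 := sq_abs _
      have hcard_mul : (B.card : ℝ) * (m / 2) ^ 2 ≤ (A.card : ℝ) * (m / 2) ^ 2 := by
        apply mul_le_mul_of_nonneg_right _ (by positivity)
        exact_mod_cast hBAcard
      have hBA : ∑ i ∈ B, (y i) ^ 2 < ∑ i ∈ A, (y i) ^ 2 :=
        lt_of_le_of_lt (hsumB.trans hcard_mul) hsumA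
      have hLHS : ‖y - p‖ ^ 2 = ∑ i ∈ B, (y i) ^ 2 + ∑ i ∈ C, (y i) ^ 2 := by
        rw [hyp, hdecS, Finset.sum_union hdisjBC]
      have hRHS : ∑ i ∈ A, (y i) ^ 2 + ∑ i ∈ C, (y i) ^ 2 ≤ ‖y - q‖ ^ 2 := by
        rw [hnormsq, ← Finset.sum_union hdisjAC, ← hdecT,
          ← Finset.sum_sdiff (Finset.subset_univ T)]
        have h1 : ∑ i ∈ Finset.univ \ T, (y i) ^ 2
            = ∑ i ∈ Finset.univ \ T, (y i - q i) ^ 2 := by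
          refine Finset.sum_congr rfl fun i hi => ?_
          rw [hqT i (Finset.mem_sdiff.mp hi).2, sub_zero]
        rw [h1]
        have h2 : (0 : ℝ) ≤ ∑ i ∈ T, (y i - q i) ^ 2 :=
          Finset.sum_nonneg fun i _ => sq_nonneg _
        linarith
      linarith
  -- conclude
  have hle : ∀ q ∈ Nset, ‖y - p‖ ≤ ‖y - q‖ := by
    intro q hq
    by_cases hqp : q = p
    · rw [hqp]
    · have := key q hq hqp
      nlinarith [norm_nonneg (y - p), norm_nonneg (y - q)]
  have hNne : Nset.Nonempty := ⟨p, hpN⟩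
  have hdist : ‖y - p‖ = Metric.infDist y Nset := by
    refine le_antisymm ?_ ?_
    · by_contra h
      push_neg at h
      obtain ⟨q, hqN, hq⟩ := (Metric.infDist_lt_iff hNne).mp h
      rw [dist_eq_norm] at hq
      exact absurd hq (not_lt.mpr (hle q hqN))
    · have := Metric.infDist_le_dist_of_mem (x := y) hpN
      rwa [dist_eq_norm] at this
  refine ⟨p, ⟨hpN, hdist⟩, ?_⟩
  rintro q ⟨hqN, hqdist⟩
  by_contra hne
  have h1 := key q hqN hne
  rw [hqdist, ← hdist] at h1
  exact lt_irrefl _ h1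
end
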